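/- The variational quantities coincide with Wyner's common information: R_sh = R* = C_Wyner(X;Y), where R_sh := sup_{α∈(0,1]} (1/α) R^{(α)}. -/

import Mathlib

open Filter

noncomputable section

/-- `P` is a probability mass function on the finite type `α`. -/
def IsPMF {α : Type*} [Fintype α] (P : α → ℝ) : Prop :=
  (∀ a, 0 ≤ P a) ∧ (∑ a, P a) = 1

/-- Rényi divergence of order `1 + s` (natural logarithm), `EReal`-valued.
For `s ≥ 0` it is `⊤` when `supp P ⊄ supp Q`; for `s = 0` it is the relative
entropy; otherwise it is `(1/s) log ∑_{x ∈ supp P} P(x)^{1+s} Q(x)^{-s}`. -/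
def renyiDiv {α : Type*} [Fintype α] (s : ℝ) (P Q : α → ℝ) : EReal :=
  if 0 ≤ s ∧ ∃ a, 0 < P a ∧ Q a = 0 then ⊤
  else if s = 0 then
    (((∑ a ∈ Finset.univ.filter (fun a => 0 < P a), P a * Real.log (P a / Q a)) : ℝ) : EReal)
  else
    ((((1 / s) * Real.log (∑ a ∈ Finset.univ.filter (fun a => 0 < P a),
        P a ^ (1 + s) * Q a ^ (-s))) : ℝ) : EReal)

/-- Mutual information `I(XY; W)` of a joint distribution on `(X × Y) × W`. -/
def mutualInfoW {X Y W : Type*} [Fintype X] [Fintype Y] [Fintype W] (P : X × Y × W → ℝ) : ℝ :=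
  ∑ z ∈ Finset.univ.filter (fun z : X × Y × W => 0 < P z),
    P z * Real.log (P z /
      ((∑ w, P (z.1, z.2.1, w)) * (∑ p : X × Y, P (p.1, p.2, z.2.2))))

/-- The Markov chain condition `X − W − Y`. -/
def IsMarkovXWY {X Y W : Type*} [Fintype X] [Fintype Y] [Fintype W] (P : X × Y × W → ℝ) : Prop :=
  ∀ x y w, P (x, y, w) * (∑ p : X × Y, P (p.1, p.2, w)) =
    (∑ y', P (x, y', w)) * (∑ x', P (x', y, w))

/-- Wyner's common information of the target distribution `π` on `X × Y`. -/
def CWyner {X Y : Type*} [Fintype X] [Fintype Y] (π : X × Y → ℝ) : ℝ :=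
  sInf { r | ∃ P : X × Y × Fin (Fintype.card X * Fintype.card Y) → ℝ,
    IsPMF P ∧ (∀ x y, (∑ w, P (x, y, w)) = π (x, y)) ∧ IsMarkovXWY P ∧ r = mutualInfoW P }

/-- The message set size `⌈e^{nR}⌉` of a rate-`R` synthesis code at blocklength `n`. -/
def numMsgs (R : ℝ) (n : ℕ) : ℕ := ⌈Real.exp (n * R)⌉₊

/-- A synthesis code: a pair of conditional distributions from the message set to
`X^n` and `Y^n` respectively. -/
structure SynthCode (X Y : Type*) [Fintype X] [Fintype Y] (M n : ℕ) where
  PX : Fin M → (Fin n → X) → ℝ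
  PY : Fin M → (Fin n → Y) → ℝ
  PX_pmf : ∀ m, IsPMF (PX m)
  PY_pmf : ∀ m, IsPMF (PY m)

/-- The distribution `P_{X^n Y^n}` induced by a synthesis code. -/
def SynthCode.induced {X Y : Type*} [Fintype X] [Fintype Y] {M n : ℕ}
    (c : SynthCode X Y M n) : (Fin n → X) × (Fin n → Y) → ℝ :=
  fun z => (M : ℝ)⁻¹ * ∑ m, c.PX m z.1 * c.PY m z.2

/-- The `n`-fold product distribution `π^{⊗ n}` on `X^n × Y^n`. -/
def prodDist {X Y : Type*} [Fintype X] [Fintype Y] (π : X × Y → ℝ) (n : ℕ) :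
    (Fin n → X) × (Fin n → Y) → ℝ :=
  fun z => ∏ i, π (z.1 i, z.2 i)

/-- Total variation distance between two distributions on a finite type. -/
def tvDist {α : Type*} [Fintype α] (P Q : α → ℝ) : ℝ :=
  (∑ a, |P a - Q a|) / 2

/-- Marginal `Q_U` of a distribution on `X × Y × U`. -/
def margU {X Y U : Type*} [Fintype X] [Fintype Y] [Fintype U] (Q : X × Y × U → ℝ) (u : U) : ℝ :=
  ∑ p : X × Y, Q (p.1, p.2, u)

/-- Marginal `Q_{XU}` of a distribution on `X × Y × U`. -/
def margXU {X Y U : Type*} [Fintype X] [Fintype Y] [Fintype U] (Q : X × Y × U → ℝ)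
    (x : X) (u : U) : ℝ := ∑ y, Q (x, y, u)

/-- Marginal `Q_{YU}` of a distribution on `X × Y × U`. -/
def margYU {X Y U : Type*} [Fintype X] [Fintype Y] [Fintype U] (Q : X × Y × U → ℝ)
    (y : Y) (u : U) : ℝ := ∑ x, Q (x, y, u)

/-- Marginal `Q_{XY}` of a distribution on `X × Y × U`. -/
def margXY {X Y U : Type*} [Fintype X] [Fintype Y] [Fintype U] (Q : X × Y × U → ℝ)
    (x : X) (y : Y) : ℝ := ∑ u, Q (x, y, u)

/-- The set `𝒬` of distributions `Q_{XYU}` on `X × Y × U` (with `|U| = |X||Y|`)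
whose `X × Y` marginal is supported inside `supp π`. -/
def QClass {X Y : Type*} [Fintype X] [Fintype Y] (π : X × Y → ℝ) :
    Set (X × Y × Fin (Fintype.card X * Fintype.card Y) → ℝ) :=
  { Q | IsPMF Q ∧ ∀ x y, 0 < margXY Q x y → 0 < π (x, y) }

/-- The linear combination of likelihood ratios `ω^{(α)}_{Q_{XYU}}(x,y|u)`:
`ᾱ ( log (Q_{XY}/π) + log (Q_{XY|U}/(Q_{X|U}Q_{Y|U})) ) + α log (Q_{XY|U}/π)`. -/
def omegaFn {X Y U : Type*} [Fintype X] [Fintype Y] [Fintype U] (π : X × Y → ℝ) (α : ℝ)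
    (Q : X × Y × U → ℝ) (z : X × Y × U) : ℝ :=
  (1 - α) * (Real.log (margXY Q z.1 z.2.1 / π (z.1, z.2.1)) +
      Real.log (Q z * margU Q z.2.2 / (margXU Q z.1 z.2.2 * margYU Q z.2.1 z.2.2))) +
    α * Real.log (Q z / (margU Q z.2.2 * π (z.1, z.2.1)))

/-- The negative cumulant generating function `Ω^{(α,θ)}(Q_{XYU})`. -/
def OmegaQ {X Y U : Type*} [Fintype X] [Fintype Y] [Fintype U] (π : X × Y → ℝ) (α θ : ℝ)
    (Q : X × Y × U → ℝ) : ℝ :=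
  -Real.log (∑ z ∈ Finset.univ.filter (fun z : X × Y × U => 0 < Q z),
    Q z * Real.exp (-(θ * omegaFn π α Q z)))

/-- The minimized negative cumulant generating function `Ω^{(α,θ)}`. -/
def OmegaMin {X Y : Type*} [Fintype X] [Fintype Y] (π : X × Y → ℝ) (α θ : ℝ) : ℝ :=
  sInf { r | ∃ Q ∈ QClass π, r = OmegaQ π α θ Q }


/-- Relative entropy (KL divergence) between two distributions on a finite type. -/
def klDiv {α : Type*} [Fintype α] (P Q : α → ℝ) : ℝ :=
  ∑ a ∈ Finset.univ.filter (fun a => 0 < P a), P a * Real.log (P a / Q a)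

/-- The conditional relative entropy `D(Q_{XY|U} ‖ Q_{X|U} Q_{Y|U} | Q_U)`. -/
def condKLind {X Y U : Type*} [Fintype X] [Fintype Y] [Fintype U] (Q : X × Y × U → ℝ) : ℝ :=
  ∑ z ∈ Finset.univ.filter (fun z : X × Y × U => 0 < Q z),
    Q z * Real.log (Q z * margU Q z.2.2 / (margXU Q z.1 z.2.2 * margYU Q z.2.1 z.2.2))

/-- The conditional relative entropy `D(Q_{XY|U} ‖ π_{XY} | Q_U)`. -/
def condKLpi {X Y U : Type*} [Fintype X] [Fintype Y] [Fintype U] (π : X × Y → ℝ)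
    (Q : X × Y × U → ℝ) : ℝ :=
  ∑ z ∈ Finset.univ.filter (fun z : X × Y × U => 0 < Q z),
    Q z * Real.log (Q z / (margU Q z.2.2 * π (z.1, z.2.1)))

/-- `R^{(α)}(Q_{XYU}) = ᾱ (D(Q_{XY}‖π) + D(Q_{XY|U}‖Q_{X|U}Q_{Y|U}|Q_U))
       + α D(Q_{XY|U}‖π|Q_U)`. -/
def Ralpha {X Y U : Type*} [Fintype X] [Fintype Y] [Fintype U] (π : X × Y → ℝ) (α : ℝ)
    (Q : X × Y × U → ℝ) : ℝ :=
  (1 - α) * (klDiv (fun p : X × Y => margXY Q p.1 p.2) π + condKLind Q) + α * condKLpi π Q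

/-- `R^{(α)} = min_{Q_{XYU} ∈ 𝒬} R^{(α)}(Q_{XYU})`. -/
def RalphaMin {X Y : Type*} [Fintype X] [Fintype Y] (π : X × Y → ℝ) (α : ℝ) : ℝ :=
  sInf { r | ∃ Q ∈ QClass π, r = Ralpha π α Q }

/-- `R_sh := sup_{α ∈ (0,1]} (1/α) R^{(α)}`. -/
def Rsh {X Y : Type*} [Fintype X] [Fintype Y] (π : X × Y → ℝ) : ℝ :=
  sSup { r | ∃ α ∈ Set.Ioc (0 : ℝ) 1, r = (1 / α) * RalphaMin π α }

/-- Wyner's common information, minimizing over auxiliary alphabets of arbitrary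
(finite) size. -/
def CWynerAll {X Y : Type*} [Fintype X] [Fintype Y] (π : X × Y → ℝ) : ℝ :=
  sInf { r | ∃ (k : ℕ) (P : X × Y × Fin k → ℝ),
    IsPMF P ∧ (∀ x y, (∑ w, P (x, y, w)) = π (x, y)) ∧ IsMarkovXWY P ∧ r = mutualInfoW P }

section Gibbs

open Finset

variable {α : Type*} [Fintype α]

/-- Extend a sum over the positive-support of `f` to a full sum. -/
lemma sum_filter_pos {f : α → ℝ} (hf : ∀ a, 0 ≤ f a) (g : α → ℝ)
    (hg : ∀ a, f a = 0 → g a = 0) :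
    ∑ a ∈ univ.filter (fun a => 0 < f a), g a = ∑ a, g a := by
  refine Finset.sum_filter_of_ne fun x _ hx => ?_
  rcases (hf x).lt_or_eq with h | h
  · exact h
  · exact absurd (hg x h.symm) hx

lemma term_ge {f g : ℝ} (hf : 0 < f) (hg : 0 < g) :
    f - g ≤ f * Real.log (f / g) := by
  have h := Real.log_le_sub_one_of_pos (x := g / f) (by positivity)
  have hlog : Real.log (f / g) = - Real.log (g / f) := by
    rw [← Real.log_inv, inv_div]
  have h2 : f * Real.log (g / f) ≤ f * (g / f - 1) :=
    mul_le_mul_of_nonneg_left h hf.le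
  have h3 : f * (g / f - 1) = g - f := by field_simp
  rw [hlog]; linarith

lemma term_gt {f g : ℝ} (hf : 0 < f) (hg : 0 < g) (hne : f ≠ g) :
    f - g < f * Real.log (f / g) := by
  have h1 : g / f ≠ 1 := by
    intro h; exact hne (by field_simp at h; linarith)
  have h := Real.log_lt_sub_one_of_pos (x := g / f) (by positivity) h1
  have hlog : Real.log (f / g) = - Real.log (g / f) := by
    rw [← Real.log_inv, inv_div]
  have h2 : f * Real.log (g / f) < f * (g / f - 1) :=
    (mul_lt_mul_iff_right₀ hf).2 h
  have h3 : f * (g / f - 1) = g - f := by field_simp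
  rw [hlog]; linarith

/-- Gibbs' inequality (nonnegativity of relative entropy), sub-probability version. -/
lemma gibbs_nonneg {f g : α → ℝ} (hf0 : ∀ a, 0 ≤ f a) (hf1 : ∑ a, f a = 1)
    (hfg : ∀ a, 0 < f a → 0 < g a)
    (hg1 : ∑ a ∈ univ.filter (fun a => 0 < f a), g a ≤ 1) :
    0 ≤ ∑ a ∈ univ.filter (fun a => 0 < f a), f a * Real.log (f a / g a) := by
  have key : ∑ a ∈ univ.filter (fun a => 0 < f a), (f a - g a) ≤
      ∑ a ∈ univ.filter (fun a => 0 < f a), f a * Real.log (f a / g a) := by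
    refine Finset.sum_le_sum fun a ha => ?_
    have hfa := (Finset.mem_filter.1 ha).2
    exact term_ge hfa (hfg a hfa)
  have hsf : ∑ a ∈ univ.filter (fun a => 0 < f a), f a = 1 := by
    rw [sum_filter_pos hf0 f (fun a h => h)]; exact hf1
  rw [Finset.sum_sub_distrib, hsf] at key
  linarith

/-- Equality case of Gibbs' inequality. -/
lemma gibbs_eq_zero {f g : α → ℝ} (hf0 : ∀ a, 0 ≤ f a) (hf1 : ∑ a, f a = 1)
    (hg0 : ∀ a, 0 ≤ g a) (hfg : ∀ a, 0 < f a → 0 < g a)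
    (hg1 : ∑ a, g a ≤ 1)
    (heq : ∑ a ∈ univ.filter (fun a => 0 < f a), f a * Real.log (f a / g a) = 0) :
    f = g := by
  classical
  set s := univ.filter (fun a => 0 < f a) with hs
  have hsub : ∑ a ∈ s, g a ≤ 1 := le_trans (Finset.sum_le_sum_of_subset_of_nonneg
    (Finset.filter_subset _ _) (fun a _ _ => hg0 a)) hg1
  have hsf : ∑ a ∈ s, f a = 1 := by
    rw [hs, sum_filter_pos hf0 f (fun a h => h)]; exact hf1
  -- T a := f log(f/g) - (f - g) ≥ 0 on s, and ∑ T = ∑ g - 1 ≤ 0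
  have hTn : ∀ a ∈ s, 0 ≤ f a * Real.log (f a / g a) - (f a - g a) := by
    intro a ha
    have hfa := (Finset.mem_filter.1 ha).2
    linarith [term_ge hfa (hfg a hfa)]
  have hTsum : ∑ a ∈ s, (f a * Real.log (f a / g a) - (f a - g a)) =
      ∑ a ∈ s, g a - 1 := by
    rw [Finset.sum_sub_distrib, heq, Finset.sum_sub_distrib, hsf]; ring
  have hgs1 : ∑ a ∈ s, g a = 1 := by
    have h0 : 0 ≤ ∑ a ∈ s, (f a * Real.log (f a / g a) - (f a - g a)) :=
      Finset.sum_nonneg hTn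
    rw [hTsum] at h0
    linarith
  have hT0 : ∀ a ∈ s, f a * Real.log (f a / g a) - (f a - g a) = 0 := by
    have := (Finset.sum_eq_zero_iff_of_nonneg hTn).1 (by rw [hTsum, hgs1]; ring)
    exact this
  funext a
  by_cases ha : a ∈ s
  · have hfa := (Finset.mem_filter.1 ha).2
    by_contra hne
    have := term_gt hfa (hfg a hfa) hne
    have := hT0 a ha
    linarith
  · have hfa : f a = 0 := by
      have := hf0 a
      simp only [hs, Finset.mem_filter, Finset.mem_univ, true_and, not_lt] at ha
      linarith
    have hga : g a = 0 := by
      -- ∑_{univ} g ≤ 1 = ∑_s g, so g vanishes off s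
      have h1 : ∑ b ∈ s, g b + ∑ b ∈ sᶜ, g b = ∑ b, g b := by
        rw [Finset.sum_add_sum_compl]
      have h2 : ∑ b ∈ sᶜ, g b ≤ 0 := by rw [hgs1] at h1; linarith
      have h3 : ∀ b ∈ sᶜ, 0 ≤ g b := fun b _ => hg0 b
      have h4 : ∑ b ∈ sᶜ, g b = 0 := le_antisymm h2 (Finset.sum_nonneg h3)
      have := (Finset.sum_eq_zero_iff_of_nonneg h3).1 h4 a (by simpa using ha)
      exact this
    rw [hfa, hga]
end Gibbs
section Helpers

open Finset

variable {X Y U : Type*} [Fintype X] [Fintype Y] [Fintype U]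

lemma sum_triple (f : X × Y × U → ℝ) :
    ∑ z, f z = ∑ x, ∑ y, ∑ u, f (x, y, u) := by
  rw [Fintype.sum_prod_type]
  exact Finset.sum_congr rfl fun x _ => Fintype.sum_prod_type _

lemma margU_eq (Q : X × Y × U → ℝ) (u : U) :
    margU Q u = ∑ x, ∑ y, Q (x, y, u) := Fintype.sum_prod_type _

lemma sum_comm3 (f : X → Y → U → ℝ) :
    ∑ x, ∑ y, ∑ u, f x y u = ∑ u, ∑ x, ∑ y, f x y u := by
  have h1 : ∑ x, ∑ y, ∑ u, f x y u = ∑ x, ∑ u, ∑ y, f x y u :=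
    Finset.sum_congr rfl fun x _ => Finset.sum_comm
  rw [h1]; exact Finset.sum_comm

lemma sum_margU (Q : X × Y × U → ℝ) : ∑ u, margU Q u = ∑ z, Q z := by
  rw [sum_triple Q, sum_comm3]
  exact Finset.sum_congr rfl fun u _ => margU_eq Q u

lemma sum_margXY (Q : X × Y × U → ℝ) : ∑ p : X × Y, margXY Q p.1 p.2 = ∑ z, Q z := by
  rw [sum_triple Q, Fintype.sum_prod_type]
  rfl

lemma sum_margXU (Q : X × Y × U → ℝ) (u : U) : ∑ x, margXU Q x u = margU Q u := by
  rw [margU_eq]; rfl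

lemma sum_margYU (Q : X × Y × U → ℝ) (u : U) : ∑ y, margYU Q y u = margU Q u := by
  rw [margU_eq, Finset.sum_comm]; rfl

variable {Q : X × Y × U → ℝ}

lemma margU_nonneg (hQ : ∀ z, 0 ≤ Q z) (u : U) : 0 ≤ margU Q u :=
  Finset.sum_nonneg fun p _ => hQ _

lemma margXU_nonneg (hQ : ∀ z, 0 ≤ Q z) (x : X) (u : U) : 0 ≤ margXU Q x u :=
  Finset.sum_nonneg fun y _ => hQ _

lemma margYU_nonneg (hQ : ∀ z, 0 ≤ Q z) (y : Y) (u : U) : 0 ≤ margYU Q y u :=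
  Finset.sum_nonneg fun x _ => hQ _

lemma margXY_nonneg (hQ : ∀ z, 0 ≤ Q z) (x : X) (y : Y) : 0 ≤ margXY Q x y :=
  Finset.sum_nonneg fun u _ => hQ _

lemma le_margU (hQ : ∀ z, 0 ≤ Q z) (x : X) (y : Y) (u : U) :
    Q (x, y, u) ≤ margU Q u :=
  Finset.single_le_sum (f := fun p : X × Y => Q (p.1, p.2, u))
    (fun p _ => hQ _) (Finset.mem_univ (x, y))

lemma le_margXU (hQ : ∀ z, 0 ≤ Q z) (x : X) (y : Y) (u : U) :
    Q (x, y, u) ≤ margXU Q x u :=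
  Finset.single_le_sum (f := fun y' => Q (x, y', u)) (fun y' _ => hQ _) (Finset.mem_univ y)

lemma le_margYU (hQ : ∀ z, 0 ≤ Q z) (x : X) (y : Y) (u : U) :
    Q (x, y, u) ≤ margYU Q y u :=
  Finset.single_le_sum (f := fun x' => Q (x', y, u)) (fun x' _ => hQ _) (Finset.mem_univ x)

lemma le_margXY (hQ : ∀ z, 0 ≤ Q z) (x : X) (y : Y) (u : U) :
    Q (x, y, u) ≤ margXY Q x y :=
  Finset.single_le_sum (f := fun u' => Q (x, y, u')) (fun u' _ => hQ _) (Finset.mem_univ u)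

end Helpers
section PartA

open Finset

variable {X Y U : Type*} [Fintype X] [Fintype Y] [Fintype U]
variable {π : X × Y → ℝ} {Q : X × Y × U → ℝ}

/-- `∑_z F(x,y) * G(u) = (∑ F)(∑ G)` over triples. -/
lemma sum_factor (F : X × Y → ℝ) (G : U → ℝ) :
    ∑ z : X × Y × U, F (z.1, z.2.1) * G z.2.2 = (∑ p, F p) * (∑ u, G u) := by
  rw [sum_triple (fun z : X × Y × U => F (z.1, z.2.1) * G z.2.2), Fintype.sum_prod_type,
    Finset.sum_mul]
  exact Finset.sum_congr rfl fun x _ => by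
    rw [Finset.sum_mul]
    exact Finset.sum_congr rfl fun y _ => by
      show ∑ u : U, F (x, y) * G u = F (x, y) * ∑ u : U, G u
      rw [Finset.mul_sum]

lemma klDiv_marg_nonneg (hπ : IsPMF π) (hQ : IsPMF Q)
    (hsupp : ∀ x y, 0 < margXY Q x y → 0 < π (x, y)) :
    0 ≤ klDiv (fun p : X × Y => margXY Q p.1 p.2) π := by
  refine gibbs_nonneg (fun p => margXY_nonneg hQ.1 p.1 p.2) ?_ (fun p hp => hsupp p.1 p.2 hp) ?_
  · rw [sum_margXY]; exact hQ.2
  · calc ∑ p ∈ univ.filter (fun p : X × Y => 0 < margXY Q p.1 p.2), π p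
        ≤ ∑ p, π p := Finset.sum_le_sum_of_subset_of_nonneg (Finset.filter_subset _ _)
          (fun p _ _ => hπ.1 p)
      _ = 1 := hπ.2

lemma condKLind_nonneg (hQ : IsPMF Q) : 0 ≤ condKLind Q := by
  have hterm : ∀ z : X × Y × U, 0 < Q z →
      Q z * Real.log (Q z * margU Q z.2.2 / (margXU Q z.1 z.2.2 * margYU Q z.2.1 z.2.2)) =
      Q z * Real.log (Q z / (margXU Q z.1 z.2.2 * margYU Q z.2.1 z.2.2 / margU Q z.2.2)) := by
    intro z _
    rw [div_div_eq_mul_div]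
  have hpos : ∀ z : X × Y × U, 0 < Q z →
      0 < margXU Q z.1 z.2.2 * margYU Q z.2.1 z.2.2 / margU Q z.2.2 := by
    intro z hz
    obtain ⟨x, y, u⟩ := z
    have h1 := lt_of_lt_of_le hz (le_margXU hQ.1 x y u)
    have h2 := lt_of_lt_of_le hz (le_margYU hQ.1 x y u)
    have h3 := lt_of_lt_of_le hz (le_margU hQ.1 x y u)
    positivity
  have hgs : ∀ u : U, ∑ x, ∑ y, margXU Q x u * margYU Q y u / margU Q u = margU Q u := by
    intro u
    have inner : ∀ x, ∑ y, margXU Q x u * margYU Q y u / margU Q u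
        = margXU Q x u * (∑ y, margYU Q y u) / margU Q u := by
      intro x; rw [Finset.mul_sum, Finset.sum_div]
    have : ∑ x, ∑ y, margXU Q x u * margYU Q y u / margU Q u
        = (∑ x, margXU Q x u) * (∑ y, margYU Q y u) / margU Q u := by
      rw [Finset.sum_congr rfl (fun x _ => inner x), ← Finset.sum_div, ← Finset.sum_mul]
    rw [this, sum_margXU, sum_margYU]
    rcases eq_or_ne (margU Q u) 0 with h | h
    · rw [h]; simp
    · field_simp
  have hsum : ∑ z : X × Y × U, margXU Q z.1 z.2.2 * margYU Q z.2.1 z.2.2 / margU Q z.2.2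
      = 1 := by
    rw [sum_triple (fun z : X × Y × U =>
      margXU Q z.1 z.2.2 * margYU Q z.2.1 z.2.2 / margU Q z.2.2), sum_comm3]
    calc ∑ u, ∑ x, ∑ y, margXU Q x u * margYU Q y u / margU Q u
        = ∑ u, margU Q u := Finset.sum_congr rfl fun u _ => hgs u
      _ = ∑ z, Q z := sum_margU Q
      _ = 1 := hQ.2
  have h := gibbs_nonneg (g := fun z : X × Y × U =>
      margXU Q z.1 z.2.2 * margYU Q z.2.1 z.2.2 / margU Q z.2.2) hQ.1 hQ.2 hpos ?_
  · unfold condKLind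
    rw [Finset.sum_congr rfl (fun z hz => hterm z (Finset.mem_filter.1 hz).2)]
    exact h
  · rw [← hsum]
    refine Finset.sum_le_sum_of_subset_of_nonneg (Finset.filter_subset _ _) fun z _ _ => ?_
    obtain ⟨x, y, u⟩ := z
    have h1 := margXU_nonneg hQ.1 x u
    have h2 := margYU_nonneg hQ.1 y u
    have h3 := margU_nonneg hQ.1 u
    positivity

lemma condKLpi_nonneg (hπ : IsPMF π) (hQ : IsPMF Q)
    (hsupp : ∀ x y, 0 < margXY Q x y → 0 < π (x, y)) :
    0 ≤ condKLpi π Q := by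
  refine gibbs_nonneg (g := fun z : X × Y × U => margU Q z.2.2 * π (z.1, z.2.1))
    hQ.1 hQ.2 ?_ ?_
  · intro z hz
    obtain ⟨x, y, u⟩ := z
    have h1 := lt_of_lt_of_le hz (le_margU hQ.1 x y u)
    have h2 : 0 < π (x, y) := hsupp x y (lt_of_lt_of_le hz (le_margXY hQ.1 x y u))
    positivity
  · have : ∑ z : X × Y × U, margU Q z.2.2 * π (z.1, z.2.1) = 1 := by
      have := sum_factor (U := U) π (margU Q)
      calc ∑ z : X × Y × U, margU Q z.2.2 * π (z.1, z.2.1)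
          = ∑ z : X × Y × U, π (z.1, z.2.1) * margU Q z.2.2 :=
            Finset.sum_congr rfl fun z _ => mul_comm _ _
        _ = (∑ p, π p) * (∑ u, margU Q u) := this
        _ = 1 := by rw [hπ.2, sum_margU, hQ.2, one_mul]
    rw [← this]
    refine Finset.sum_le_sum_of_subset_of_nonneg (Finset.filter_subset _ _) fun z _ _ => ?_
    exact mul_nonneg (margU_nonneg hQ.1 _) (hπ.1 _)

lemma mutualInfoW_nonneg {P : X × Y × U → ℝ} (hP : IsPMF P) : 0 ≤ mutualInfoW P := by
  refine gibbs_nonneg (g := fun z : X × Y × U =>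
    (∑ w, P (z.1, z.2.1, w)) * (∑ p : X × Y, P (p.1, p.2, z.2.2))) hP.1 hP.2 ?_ ?_
  · intro z hz
    obtain ⟨x, y, u⟩ := z
    have h1 := lt_of_lt_of_le hz (le_margXY hP.1 x y u)
    have h2 := lt_of_lt_of_le hz (le_margU hP.1 x y u)
    exact mul_pos h1 h2
  · have : ∑ z : X × Y × U, (∑ w, P (z.1, z.2.1, w)) * (∑ p : X × Y, P (p.1, p.2, z.2.2))
        = 1 := by
      have := sum_factor (U := U) (fun p : X × Y => margXY P p.1 p.2) (margU P)
      calc ∑ z : X × Y × U, (∑ w, P (z.1, z.2.1, w)) * (∑ p : X × Y, P (p.1, p.2, z.2.2))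
          = (∑ p : X × Y, margXY P p.1 p.2) * (∑ u, margU P u) := this
        _ = 1 := by rw [sum_margXY, sum_margU, hP.2, one_mul]
    rw [← this]
    refine Finset.sum_le_sum_of_subset_of_nonneg (Finset.filter_subset _ _) fun z _ _ => ?_
    exact mul_nonneg (margXY_nonneg hP.1 _ _) (margU_nonneg hP.1 _)

end PartA
section Feasible

open Finset

variable {X Y U : Type*} [Fintype X] [Fintype Y] [Fintype U]
variable {π : X × Y → ℝ} {P : X × Y × U → ℝ}

lemma klDiv_self_of_marg (hm : ∀ x y, (∑ w, P (x, y, w)) = π (x, y)) :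
    klDiv (fun p : X × Y => margXY P p.1 p.2) π = 0 := by
  have hm' : (fun p : X × Y => margXY P p.1 p.2) = π := funext fun p => hm p.1 p.2
  rw [hm']
  refine Finset.sum_eq_zero fun p hp => ?_
  have hp' := (Finset.mem_filter.1 hp).2
  rw [div_self hp'.ne', Real.log_one, mul_zero]

lemma condKLind_eq_zero (hP : IsPMF P) (hMk : IsMarkovXWY P) : condKLind P = 0 := by
  refine Finset.sum_eq_zero fun z hz => ?_
  obtain ⟨x, y, u⟩ := z
  have hz' : 0 < P (x, y, u) := (Finset.mem_filter.1 hz).2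
  have h1 := lt_of_lt_of_le hz' (le_margXU hP.1 x y u)
  have h2 := lt_of_lt_of_le hz' (le_margYU hP.1 x y u)
  have hMarkov : P (x, y, u) * margU P u = margXU P x u * margYU P y u := hMk x y u
  show P (x, y, u) * Real.log (P (x, y, u) * margU P u / (margXU P x u * margYU P y u)) = 0
  rw [hMarkov, div_self (mul_pos h1 h2).ne', Real.log_one, mul_zero]

lemma condKLpi_eq_mutualInfoW (hm : ∀ x y, (∑ w, P (x, y, w)) = π (x, y)) :
    condKLpi π P = mutualInfoW P := by
  refine Finset.sum_congr rfl fun z _ => ?_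
  obtain ⟨x, y, u⟩ := z
  show P (x, y, u) * Real.log (P (x, y, u) / (margU P u * π (x, y))) = _
  rw [hm x y]
  show _ = P (x, y, u) * Real.log (P (x, y, u) / (π (x, y) * margU P u))
  rw [mul_comm (margU P u) (π (x, y))]

lemma Ralpha_of_wyner (hP : IsPMF P) (hm : ∀ x y, (∑ w, P (x, y, w)) = π (x, y))
    (hMk : IsMarkovXWY P) (α : ℝ) :
    Ralpha π α P = α * mutualInfoW P := by
  unfold Ralpha
  rw [klDiv_self_of_marg hm, condKLind_eq_zero hP hMk, condKLpi_eq_mutualInfoW hm]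
  ring

lemma Ralpha_nonneg {Q : X × Y × U → ℝ} (hπ : IsPMF π) (hQ : IsPMF Q)
    (hsupp : ∀ x y, 0 < margXY Q x y → 0 < π (x, y)) {α : ℝ} (h0 : 0 ≤ α) (h1 : α ≤ 1) :
    0 ≤ Ralpha π α Q := by
  have := klDiv_marg_nonneg hπ hQ hsupp
  have := condKLind_nonneg hQ
  have := condKLpi_nonneg hπ hQ hsupp
  have h2 : (0:ℝ) ≤ 1 - α := by linarith
  unfold Ralpha
  positivity

end Feasible

section Canonical

open Finset

variable {X Y : Type*} [Fintype X] [Fintype Y] {π : X × Y → ℝ}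

/-- The canonical Wyner-feasible distribution: `W = (X, Y)` deterministically. -/
def canonP (π : X × Y → ℝ) (e : X × Y ≃ Fin (Fintype.card X * Fintype.card Y)) :
    X × Y × Fin (Fintype.card X * Fintype.card Y) → ℝ :=
  fun z => if e (z.1, z.2.1) = z.2.2 then π (z.1, z.2.1) else 0

lemma exists_wyner (hπ : IsPMF π) :
    ∃ P : X × Y × Fin (Fintype.card X * Fintype.card Y) → ℝ,
      IsPMF P ∧ (∀ x y, (∑ w, P (x, y, w)) = π (x, y)) ∧ IsMarkovXWY P := by
  have hne : Nonempty (X × Y) := by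
    by_contra h
    rw [not_nonempty_iff] at h
    have h2 := hπ.2
    rw [Finset.univ_eq_empty, Finset.sum_empty] at h2
    exact one_ne_zero h2.symm
  have e : X × Y ≃ Fin (Fintype.card X * Fintype.card Y) :=
    (Fintype.equivFin (X × Y)).trans (finCongr (Fintype.card_prod X Y))
  refine ⟨canonP π e, ⟨fun z => ?_, ?_⟩, ?_, ?_⟩
  · unfold canonP
    split
    · exact hπ.1 _
    · exact le_refl 0
  · rw [sum_triple (canonP π e)]
    have hx : ∀ x y, ∑ w, canonP π e (x, y, w) = π (x, y) := by
      intro x y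
      unfold canonP
      simp
    calc ∑ x, ∑ y, ∑ w, canonP π e (x, y, w) = ∑ x, ∑ y, π (x, y) :=
          Finset.sum_congr rfl fun x _ => Finset.sum_congr rfl fun y _ => hx x y
      _ = ∑ p : X × Y, π p := (Fintype.sum_prod_type π).symm
      _ = 1 := hπ.2
  · intro x y
    unfold canonP
    simp
  · intro x y w
    classical
    have hU : (∑ p : X × Y, canonP π e (p.1, p.2, w)) = π (e.symm w) := by
      unfold canonP
      rw [Finset.sum_congr rfl (fun p _ => by
        show (if e (p.1, p.2) = w then π (p.1, p.2) else 0) =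
          (if p = e.symm w then π p else 0)
        have hiff : e (p.1, p.2) = w ↔ p = e.symm w := by
          rw [Prod.mk.eta, Equiv.apply_eq_iff_eq_symm_apply]
        by_cases hp : p = e.symm w
        · rw [if_pos (hiff.2 hp), if_pos hp, Prod.mk.eta]
        · rw [if_neg (fun hc => hp (hiff.1 hc)), if_neg hp])]
      simp
    have hXU : (∑ y', canonP π e (x, y', w)) =
        if (e.symm w).1 = x then π (e.symm w) else 0 := by
      unfold canonP
      rcases eq_or_ne (e.symm w).1 x with h | h
      · rw [Finset.sum_eq_single (e.symm w).2]
        · simp only [← h, Prod.mk.eta, Equiv.apply_symm_apply, if_pos rfl]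
        · intro b _ hb
          rw [if_neg]
          intro hc
          apply hb
          have : (x, b) = e.symm w := by rw [Equiv.eq_symm_apply]; exact hc
          rw [← this]
        · simp
      · rw [if_neg h]
        refine Finset.sum_eq_zero fun b _ => ?_
        rw [if_neg]
        intro hc
        apply h
        have : (x, b) = e.symm w := by rw [Equiv.eq_symm_apply]; exact hc
        rw [← this]
    have hYU : (∑ x', canonP π e (x', y, w)) =
        if (e.symm w).2 = y then π (e.symm w) else 0 := by
      unfold canonP
      rcases eq_or_ne (e.symm w).2 y with h | h
      · rw [Finset.sum_eq_single (e.symm w).1]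
        · simp only [← h, Prod.mk.eta, Equiv.apply_symm_apply, if_pos rfl]
        · intro b _ hb
          rw [if_neg]
          intro hc
          apply hb
          have : (b, y) = e.symm w := by rw [Equiv.eq_symm_apply]; exact hc
          rw [← this]
        · simp
      · rw [if_neg h]
        refine Finset.sum_eq_zero fun b _ => ?_
        rw [if_neg]
        intro hc
        apply h
        have : (b, y) = e.symm w := by rw [Equiv.eq_symm_apply]; exact hc
        rw [← this]
    rw [hU, hXU, hYU]
    show (if e (x, y) = w then π (x, y) else 0) * π (e.symm w) = _
    rcases eq_or_ne (e (x, y)) w with h | h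
    · have hsymm : e.symm w = (x, y) := by rw [Equiv.symm_apply_eq]; exact h.symm
      rw [if_pos h, hsymm]
      simp
    · have hsymm : e.symm w ≠ (x, y) := by
        rw [Ne, Equiv.symm_apply_eq]; exact fun hc => h hc.symm
      rw [if_neg h, zero_mul]
      rcases eq_or_ne (e.symm w).1 x with h1 | h1
      · rcases eq_or_ne (e.symm w).2 y with h2 | h2
        · exact absurd (Prod.ext h1 h2) hsymm
        · rw [if_neg h2, mul_zero]
      · rw [if_neg h1, zero_mul]

end Canonical
section BoundA

open Finset

variable {X Y : Type*} [Fintype X] [Fintype Y] {π : X × Y → ℝ}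

lemma mem_QClass_of_wyner {P : X × Y × Fin (Fintype.card X * Fintype.card Y) → ℝ}
    (hP : IsPMF P) (hm : ∀ x y, (∑ w, P (x, y, w)) = π (x, y)) : P ∈ QClass π :=
  ⟨hP, fun x y h => by rw [← hm x y]; exact h⟩

lemma ralphaSet_bddBelow (hπ : IsPMF π) {α : ℝ} (h0 : 0 ≤ α) (h1 : α ≤ 1) :
    BddBelow { r | ∃ Q ∈ QClass π, r = Ralpha π α Q } := by
  refine ⟨0, fun r hr => ?_⟩
  obtain ⟨Q, hQ, rfl⟩ := hr
  exact Ralpha_nonneg hπ hQ.1 hQ.2 h0 h1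

lemma RalphaMin_le_of_wyner (hπ : IsPMF π) {α : ℝ} (h0 : 0 ≤ α) (h1 : α ≤ 1)
    {P : X × Y × Fin (Fintype.card X * Fintype.card Y) → ℝ}
    (hP : IsPMF P) (hm : ∀ x y, (∑ w, P (x, y, w)) = π (x, y)) (hMk : IsMarkovXWY P) :
    RalphaMin π α ≤ α * mutualInfoW P := by
  unfold RalphaMin
  exact csInf_le (ralphaSet_bddBelow hπ h0 h1)
    ⟨P, mem_QClass_of_wyner hP hm, (Ralpha_of_wyner hP hm hMk α).symm⟩

lemma RalphaMin_nonneg (hπ : IsPMF π) {α : ℝ} (h0 : 0 ≤ α) (h1 : α ≤ 1) :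
    0 ≤ RalphaMin π α := by
  unfold RalphaMin
  apply Real.sInf_nonneg
  rintro r ⟨Q, hQ, rfl⟩
  exact Ralpha_nonneg hπ hQ.1 hQ.2 h0 h1

lemma CWyner_nonneg (hπ : IsPMF π) : 0 ≤ CWyner π := by
  unfold CWyner
  apply Real.sInf_nonneg
  rintro r ⟨P, hP, hm, hMk, rfl⟩
  exact mutualInfoW_nonneg hP

lemma wynerSet_nonempty (hπ : IsPMF π) :
    Set.Nonempty { r | ∃ P : X × Y × Fin (Fintype.card X * Fintype.card Y) → ℝ,
      IsPMF P ∧ (∀ x y, (∑ w, P (x, y, w)) = π (x, y)) ∧ IsMarkovXWY P ∧ r = mutualInfoW P } := by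
  obtain ⟨P0, hP0, hm0, hMk0⟩ := exists_wyner hπ
  exact ⟨mutualInfoW P0, P0, hP0, hm0, hMk0, rfl⟩

lemma rshElt_le_CWyner (hπ : IsPMF π) {α : ℝ} (hα : α ∈ Set.Ioc (0:ℝ) 1) :
    1 / α * RalphaMin π α ≤ CWyner π := by
  unfold CWyner
  apply le_csInf (wynerSet_nonempty hπ)
  rintro b ⟨P, hP, hm, hMk, rfl⟩
  have h1 := RalphaMin_le_of_wyner hπ hα.1.le hα.2 hP hm hMk
  have hα0 : (0:ℝ) < α := hα.1
  calc 1 / α * RalphaMin π α ≤ 1 / α * (α * mutualInfoW P) := by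
        apply mul_le_mul_of_nonneg_left h1; positivity
    _ = mutualInfoW P := by field_simp

lemma Rsh_le_CWyner (hπ : IsPMF π) : Rsh π ≤ CWyner π := by
  unfold Rsh
  apply Real.sSup_le
  · rintro r ⟨α, hα, rfl⟩
    exact rshElt_le_CWyner hπ hα
  · exact CWyner_nonneg hπ

lemma rshSet_bddAbove (hπ : IsPMF π) :
    BddAbove { r | ∃ α ∈ Set.Ioc (0:ℝ) 1, r = 1 / α * RalphaMin π α } := by
  refine ⟨CWyner π, fun r hr => ?_⟩
  obtain ⟨α, hα, rfl⟩ := hr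
  exact rshElt_le_CWyner hπ hα

lemma Rsh_nonneg (hπ : IsPMF π) : 0 ≤ Rsh π := by
  have hmem : (1:ℝ) / 1 * RalphaMin π 1 ∈
      { r | ∃ α ∈ Set.Ioc (0:ℝ) 1, r = 1 / α * RalphaMin π α } :=
    ⟨1, ⟨one_pos, le_refl 1⟩, rfl⟩
  have h1 : 1 / 1 * RalphaMin π 1 ≤ Rsh π := le_csSup (rshSet_bddAbove hπ) hmem
  have h2 : 0 ≤ RalphaMin π 1 := RalphaMin_nonneg hπ zero_le_one (le_refl 1)
  simpa using le_trans (by simpa using h2) h1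

lemma CWynerAll_le_CWyner (hπ : IsPMF π) : CWynerAll π ≤ CWyner π := by
  unfold CWynerAll CWyner
  apply csInf_le_csInf
  · refine ⟨0, fun r hr => ?_⟩
    obtain ⟨k, P, hP, hm, hMk, rfl⟩ := hr
    exact mutualInfoW_nonneg hP
  · exact wynerSet_nonempty hπ
  · rintro r ⟨P, hP, hm, hMk, rfl⟩
    exact ⟨Fintype.card X * Fintype.card Y, P, hP, hm, hMk, rfl⟩

end BoundA
section PartBDefs

open Finset

variable {X Y U : Type*} [Fintype X] [Fintype Y] [Fintype U]

lemma sum_weight_U (Q : X × Y × U → ℝ) (h : U → ℝ) :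
    ∑ z : X × Y × U, Q z * h z.2.2 = ∑ u, margU Q u * h u := by
  rw [sum_triple (fun z : X × Y × U => Q z * h z.2.2), sum_comm3]
  refine Finset.sum_congr rfl fun u _ => ?_
  rw [margU_eq, Finset.sum_mul]
  refine Finset.sum_congr rfl fun x _ => ?_
  rw [Finset.sum_mul]

lemma sum_weight_XU (Q : X × Y × U → ℝ) (h : X → U → ℝ) :
    ∑ z : X × Y × U, Q z * h z.1 z.2.2 = ∑ x, ∑ u, margXU Q x u * h x u := by
  rw [sum_triple (fun z : X × Y × U => Q z * h z.1 z.2.2)]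
  refine Finset.sum_congr rfl fun x _ => ?_
  rw [Finset.sum_comm]
  refine Finset.sum_congr rfl fun u _ => ?_
  rw [show margXU Q x u = ∑ y, Q (x, y, u) from rfl, Finset.sum_mul]

lemma sum_weight_YU (Q : X × Y × U → ℝ) (h : Y → U → ℝ) :
    ∑ z : X × Y × U, Q z * h z.2.1 z.2.2 = ∑ y, ∑ u, margYU Q y u * h y u := by
  rw [sum_triple (fun z : X × Y × U => Q z * h z.2.1 z.2.2), Finset.sum_comm]
  refine Finset.sum_congr rfl fun y _ => ?_
  rw [Finset.sum_comm]
  refine Finset.sum_congr rfl fun u _ => ?_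
  rw [show margYU Q y u = ∑ x, Q (x, y, u) from rfl, Finset.sum_mul]

lemma sum_weight_XY (Q : X × Y × U → ℝ) (h : X → Y → ℝ) :
    ∑ z : X × Y × U, Q z * h z.1 z.2.1 = ∑ x, ∑ y, margXY Q x y * h x y := by
  rw [sum_triple (fun z : X × Y × U => Q z * h z.1 z.2.1)]
  refine Finset.sum_congr rfl fun x _ => Finset.sum_congr rfl fun y _ => ?_
  rw [show margXY Q x y = ∑ u, Q (x, y, u) from rfl, Finset.sum_mul]

/-- Negative entropy `∑ f log f`. -/
def negent {β : Type*} [Fintype β] (f : β → ℝ) : ℝ := ∑ b, f b * Real.log (f b)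

def G1 (π : X × Y → ℝ) (Q : X × Y × U → ℝ) : ℝ :=
  ∑ p ∈ Finset.univ.filter (fun p : X × Y => 0 < π p),
    (margXY Q p.1 p.2 * Real.log (margXY Q p.1 p.2) - margXY Q p.1 p.2 * Real.log (π p))

def G2 (Q : X × Y × U → ℝ) : ℝ :=
  negent Q + negent (margU Q)
    - negent (fun xu : X × U => margXU Q xu.1 xu.2)
    - negent (fun yu : Y × U => margYU Q yu.1 yu.2)

def G3 (π : X × Y → ℝ) (Q : X × Y × U → ℝ) : ℝ :=
  negent Q - negent (margU Q) - ∑ z : X × Y × U, Q z * Real.log (π (z.1, z.2.1))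

variable {π : X × Y → ℝ} {Q : X × Y × U → ℝ}

lemma klDiv_eq_G1 (hπ : ∀ p, 0 ≤ π p) (hQ : IsPMF Q)
    (hsupp : ∀ x y, 0 < margXY Q x y → 0 < π (x, y)) :
    klDiv (fun p : X × Y => margXY Q p.1 p.2) π = G1 π Q := by
  unfold klDiv G1
  rw [Finset.sum_congr rfl (fun p hp => by
    have h1 : 0 < margXY Q p.1 p.2 := (Finset.mem_filter.1 hp).2
    have h2 : 0 < π p := hsupp p.1 p.2 h1
    show margXY Q p.1 p.2 * Real.log (margXY Q p.1 p.2 / π (p.1, p.2)) =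
      margXY Q p.1 p.2 * Real.log (margXY Q p.1 p.2) - margXY Q p.1 p.2 * Real.log (π p)
    rw [Real.log_div h1.ne' (by rw [Prod.mk.eta]; exact h2.ne'), Prod.mk.eta, mul_sub])]
  refine Finset.sum_subset ?_ ?_
  · intro p hp
    simp only [Finset.mem_filter, Finset.mem_univ, true_and] at *
    exact hsupp p.1 p.2 hp
  · intro p _ hp
    simp only [Finset.mem_filter, Finset.mem_univ, true_and, not_lt] at hp
    have : margXY Q p.1 p.2 = 0 := le_antisymm hp (margXY_nonneg hQ.1 p.1 p.2)
    rw [this]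
    simp

lemma condKLind_eq_G2 (hQ : IsPMF Q) : condKLind Q = G2 Q := by
  unfold condKLind
  have hterm : ∀ z ∈ Finset.univ.filter (fun z : X × Y × U => 0 < Q z),
      Q z * Real.log (Q z * margU Q z.2.2 / (margXU Q z.1 z.2.2 * margYU Q z.2.1 z.2.2)) =
      Q z * Real.log (Q z) + Q z * Real.log (margU Q z.2.2)
        - Q z * Real.log (margXU Q z.1 z.2.2) - Q z * Real.log (margYU Q z.2.1 z.2.2) := by
    intro z hz
    obtain ⟨x, y, u⟩ := z
    have hz' : 0 < Q (x, y, u) := (Finset.mem_filter.1 hz).2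
    have h1 := lt_of_lt_of_le hz' (le_margXU hQ.1 x y u)
    have h2 := lt_of_lt_of_le hz' (le_margYU hQ.1 x y u)
    have h3 := lt_of_lt_of_le hz' (le_margU hQ.1 x y u)
    show Q (x,y,u) * Real.log (Q (x,y,u) * margU Q u / (margXU Q x u * margYU Q y u)) = _
    rw [Real.log_div (by positivity) (by positivity), Real.log_mul hz'.ne' h3.ne',
      Real.log_mul h1.ne' h2.ne']
    ring
  rw [Finset.sum_congr rfl hterm, sum_filter_pos hQ.1 _ (fun z hz => by rw [hz]; ring)]
  have hsplit : ∑ z : X × Y × U,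
      (Q z * Real.log (Q z) + Q z * Real.log (margU Q z.2.2)
        - Q z * Real.log (margXU Q z.1 z.2.2) - Q z * Real.log (margYU Q z.2.1 z.2.2))
      = (∑ z : X × Y × U, Q z * Real.log (Q z))
        + (∑ z : X × Y × U, Q z * Real.log (margU Q z.2.2))
        - (∑ z : X × Y × U, Q z * Real.log (margXU Q z.1 z.2.2))
        - (∑ z : X × Y × U, Q z * Real.log (margYU Q z.2.1 z.2.2)) := by
    rw [← Finset.sum_add_distrib, ← Finset.sum_sub_distrib, ← Finset.sum_sub_distrib]
  rw [hsplit, sum_weight_U Q (fun u => Real.log (margU Q u)),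
    sum_weight_XU Q (fun x u => Real.log (margXU Q x u)),
    sum_weight_YU Q (fun y u => Real.log (margYU Q y u))]
  unfold G2 negent
  simp [Fintype.sum_prod_type]

lemma condKLpi_eq_G3 (hQ : IsPMF Q)
    (hsupp : ∀ x y, 0 < margXY Q x y → 0 < π (x, y)) :
    condKLpi π Q = G3 π Q := by
  unfold condKLpi
  have hterm : ∀ z ∈ Finset.univ.filter (fun z : X × Y × U => 0 < Q z),
      Q z * Real.log (Q z / (margU Q z.2.2 * π (z.1, z.2.1))) =
      Q z * Real.log (Q z) - Q z * Real.log (margU Q z.2.2)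
        - Q z * Real.log (π (z.1, z.2.1)) := by
    intro z hz
    obtain ⟨x, y, u⟩ := z
    have hz' : 0 < Q (x, y, u) := (Finset.mem_filter.1 hz).2
    have h3 := lt_of_lt_of_le hz' (le_margU hQ.1 x y u)
    have h4 : 0 < π (x, y) := hsupp x y (lt_of_lt_of_le hz' (le_margXY hQ.1 x y u))
    show Q (x,y,u) * Real.log (Q (x,y,u) / (margU Q u * π (x, y))) = _
    rw [Real.log_div hz'.ne' (by positivity), Real.log_mul h3.ne' h4.ne']
    ring
  rw [Finset.sum_congr rfl hterm, sum_filter_pos hQ.1 _ (fun z hz => by rw [hz]; ring)]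
  have hsplit : ∑ z : X × Y × U,
      (Q z * Real.log (Q z) - Q z * Real.log (margU Q z.2.2)
        - Q z * Real.log (π (z.1, z.2.1)))
      = (∑ z : X × Y × U, Q z * Real.log (Q z))
        - (∑ z : X × Y × U, Q z * Real.log (margU Q z.2.2))
        - (∑ z : X × Y × U, Q z * Real.log (π (z.1, z.2.1))) := by
    rw [← Finset.sum_sub_distrib, ← Finset.sum_sub_distrib]
  rw [hsplit, sum_weight_U Q (fun u => Real.log (margU Q u))]
  unfold G3 negent
  rfl

end PartBDefs
section EqCase

open Finset

variable {X Y U : Type*} [Fintype X] [Fintype Y] [Fintype U]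
variable {π : X × Y → ℝ} {Q : X × Y × U → ℝ}

lemma margXU_le_margU (hQ : ∀ z, 0 ≤ Q z) (x : X) (u : U) : margXU Q x u ≤ margU Q u := by
  rw [← sum_margXU]
  exact Finset.single_le_sum (fun x' _ => margXU_nonneg hQ x' u) (Finset.mem_univ x)

lemma margYU_le_margU (hQ : ∀ z, 0 ≤ Q z) (y : Y) (u : U) : margYU Q y u ≤ margU Q u := by
  rw [← sum_margYU]
  exact Finset.single_le_sum (fun y' _ => margYU_nonneg hQ y' u) (Finset.mem_univ y)

lemma indDenom_sum (hQ : IsPMF Q) :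
    ∑ z : X × Y × U, margXU Q z.1 z.2.2 * margYU Q z.2.1 z.2.2 / margU Q z.2.2 = 1 := by
  have hgs : ∀ u : U, ∑ x, ∑ y, margXU Q x u * margYU Q y u / margU Q u = margU Q u := by
    intro u
    have inner : ∀ x, ∑ y, margXU Q x u * margYU Q y u / margU Q u
        = margXU Q x u * (∑ y, margYU Q y u) / margU Q u := by
      intro x; rw [Finset.mul_sum, Finset.sum_div]
    have : ∑ x, ∑ y, margXU Q x u * margYU Q y u / margU Q u
        = (∑ x, margXU Q x u) * (∑ y, margYU Q y u) / margU Q u := by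
      rw [Finset.sum_congr rfl (fun x _ => inner x), ← Finset.sum_div, ← Finset.sum_mul]
    rw [this, sum_margXU, sum_margYU]
    rcases eq_or_ne (margU Q u) 0 with h | h
    · rw [h]; simp
    · field_simp
  rw [sum_triple (fun z : X × Y × U =>
    margXU Q z.1 z.2.2 * margYU Q z.2.1 z.2.2 / margU Q z.2.2), sum_comm3]
  calc ∑ u, ∑ x, ∑ y, margXU Q x u * margYU Q y u / margU Q u
      = ∑ u, margU Q u := Finset.sum_congr rfl fun u _ => hgs u
    _ = ∑ z, Q z := sum_margU Q
    _ = 1 := hQ.2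

lemma margXY_eq_of_klDiv_zero (hπ : IsPMF π) (hQ : IsPMF Q)
    (hsupp : ∀ x y, 0 < margXY Q x y → 0 < π (x, y))
    (h0 : klDiv (fun p : X × Y => margXY Q p.1 p.2) π = 0) :
    ∀ x y, margXY Q x y = π (x, y) := by
  have := gibbs_eq_zero (f := fun p : X × Y => margXY Q p.1 p.2) (g := π)
    (fun p => margXY_nonneg hQ.1 p.1 p.2) (by rw [sum_margXY]; exact hQ.2)
    hπ.1 (fun p hp => hsupp p.1 p.2 hp) (le_of_eq hπ.2) h0
  intro x y
  exact congrFun this (x, y)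

lemma markov_of_condKLind_zero (hQ : IsPMF Q) (h0 : condKLind Q = 0) :
    IsMarkovXWY Q := by
  set g : X × Y × U → ℝ :=
    fun z => margXU Q z.1 z.2.2 * margYU Q z.2.1 z.2.2 / margU Q z.2.2 with hg
  have hterm : ∀ z ∈ Finset.univ.filter (fun z : X × Y × U => 0 < Q z),
      Q z * Real.log (Q z * margU Q z.2.2 / (margXU Q z.1 z.2.2 * margYU Q z.2.1 z.2.2)) =
      Q z * Real.log (Q z / g z) := by
    intro z _
    rw [hg, div_div_eq_mul_div]
  have heq : ∑ z ∈ Finset.univ.filter (fun z : X × Y × U => 0 < Q z),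
      Q z * Real.log (Q z / g z) = 0 := by
    rw [← Finset.sum_congr rfl hterm]
    exact h0
  have hg0 : ∀ z, 0 ≤ g z := by
    intro z
    obtain ⟨x, y, u⟩ := z
    have h1 := margXU_nonneg hQ.1 x u
    have h2 := margYU_nonneg hQ.1 y u
    have h3 := margU_nonneg hQ.1 u
    positivity
  have hfg : ∀ z, 0 < Q z → 0 < g z := by
    intro z hz
    obtain ⟨x, y, u⟩ := z
    have h1 := lt_of_lt_of_le hz (le_margXU hQ.1 x y u)
    have h2 := lt_of_lt_of_le hz (le_margYU hQ.1 x y u)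
    have h3 := lt_of_lt_of_le hz (le_margU hQ.1 x y u)
    positivity
  have hQg : Q = g := gibbs_eq_zero hQ.1 hQ.2 hg0 hfg (le_of_eq (indDenom_sum hQ)) heq
  intro x y u
  show Q (x, y, u) * margU Q u = margXU Q x u * margYU Q y u
  rcases eq_or_ne (margU Q u) 0 with hu | hu
  · have hx : margXU Q x u = 0 :=
      le_antisymm (hu ▸ margXU_le_margU hQ.1 x u) (margXU_nonneg hQ.1 x u)
    rw [hu, hx, mul_zero, zero_mul]
  · have := congrFun hQg (x, y, u)
    rw [hg] at this
    simp only at this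
    rw [this]
    field_simp

end EqCase

section TopologyPartB

open Finset Filter

variable {X Y : Type*} (π : X × Y → ℝ) (U : Type*) [Fintype X] [Fintype Y] [Fintype U]

/-- The compact constraint set for the limiting argument. -/
def KSet : Set (X × Y × U → ℝ) :=
  { Q | (∀ z, 0 ≤ Q z) ∧ (∑ z, Q z) = 1 ∧ ∀ x y, π (x, y) = 0 → margXY Q x y = 0 }

variable {π U}

lemma continuous_margU_coord (u : U) :
    Continuous (fun Q : X × Y × U → ℝ => margU Q u) :=
  continuous_finset_sum _ fun _ _ => continuous_apply _

lemma continuous_margXU_coord (x : X) (u : U) :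
    Continuous (fun Q : X × Y × U → ℝ => margXU Q x u) :=
  continuous_finset_sum _ fun _ _ => continuous_apply _

lemma continuous_margYU_coord (y : Y) (u : U) :
    Continuous (fun Q : X × Y × U → ℝ => margYU Q y u) :=
  continuous_finset_sum _ fun _ _ => continuous_apply _

lemma continuous_margXY_coord (x : X) (y : Y) :
    Continuous (fun Q : X × Y × U → ℝ => margXY Q x y) :=
  continuous_finset_sum _ fun _ _ => continuous_apply _

lemma continuous_xlogx_comp {f : (X × Y × U → ℝ) → ℝ} (hf : Continuous f) :
    Continuous (fun Q => f Q * Real.log (f Q)) :=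
  Real.continuous_mul_log.comp hf

lemma continuous_G1 (π : X × Y → ℝ) :
    Continuous (fun Q : X × Y × U → ℝ => G1 π Q) := by
  unfold G1
  refine continuous_finset_sum _ fun p _ => ?_
  exact (continuous_xlogx_comp (continuous_margXY_coord p.1 p.2)).sub
    ((continuous_margXY_coord p.1 p.2).mul continuous_const)

lemma continuous_G2 : Continuous (fun Q : X × Y × U → ℝ => G2 Q) := by
  unfold G2 negent
  refine (((continuous_finset_sum _ fun z _ => continuous_xlogx_comp (continuous_apply z)).add
    (continuous_finset_sum _ fun u _ =>
      continuous_xlogx_comp (continuous_margU_coord u))).sub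
    (continuous_finset_sum _ fun xu _ =>
      continuous_xlogx_comp (continuous_margXU_coord xu.1 xu.2))).sub
    (continuous_finset_sum _ fun yu _ =>
      continuous_xlogx_comp (continuous_margYU_coord yu.1 yu.2))

lemma continuous_G3 (π : X × Y → ℝ) :
    Continuous (fun Q : X × Y × U → ℝ => G3 π Q) := by
  unfold G3 negent
  refine ((continuous_finset_sum _ fun z _ => continuous_xlogx_comp (continuous_apply z)).sub
    (continuous_finset_sum _ fun u _ =>
      continuous_xlogx_comp (continuous_margU_coord u))).sub
    (continuous_finset_sum _ fun z _ => (continuous_apply z).mul continuous_const)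

lemma isClosed_KSet : IsClosed (KSet π U) := by
  have h1 : IsClosed { Q : X × Y × U → ℝ | ∀ z, 0 ≤ Q z } := by
    have : { Q : X × Y × U → ℝ | ∀ z, 0 ≤ Q z } = ⋂ z, { Q | 0 ≤ Q z } := by
      ext Q; simp [Set.mem_iInter]
    rw [this]
    exact isClosed_iInter fun z => isClosed_le continuous_const (continuous_apply z)
  have h2 : IsClosed { Q : X × Y × U → ℝ | (∑ z, Q z) = 1 } :=
    isClosed_eq (continuous_finset_sum _ fun z _ => continuous_apply z) continuous_const
  have h3 : IsClosed { Q : X × Y × U → ℝ | ∀ x y, π (x, y) = 0 → margXY Q x y = 0 } := by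
    have : { Q : X × Y × U → ℝ | ∀ x y, π (x, y) = 0 → margXY Q x y = 0 }
        = ⋂ (p : X × Y), { Q | π (p.1, p.2) = 0 → margXY Q p.1 p.2 = 0 } := by
      ext Q
      constructor
      · intro h
        exact Set.mem_iInter.2 fun p => h p.1 p.2
      · intro h x y
        exact Set.mem_iInter.1 h (x, y)
    rw [this]
    refine isClosed_iInter fun p => ?_
    by_cases hp : π (p.1, p.2) = 0
    · have : { Q : X × Y × U → ℝ | π (p.1, p.2) = 0 → margXY Q p.1 p.2 = 0 }
          = { Q | margXY Q p.1 p.2 = 0 } := by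
        ext Q; simp [hp]
      rw [this]
      exact isClosed_eq (continuous_margXY_coord p.1 p.2) continuous_const
    · have : { Q : X × Y × U → ℝ | π (p.1, p.2) = 0 → margXY Q p.1 p.2 = 0 }
          = Set.univ := by
        ext Q; simp [hp]
      rw [this]
      exact isClosed_univ
  have : KSet π U = { Q : X × Y × U → ℝ | ∀ z, 0 ≤ Q z } ∩
      ({ Q : X × Y × U → ℝ | (∑ z, Q z) = 1 } ∩
       { Q : X × Y × U → ℝ | ∀ x y, π (x, y) = 0 → margXY Q x y = 0 }) := by
    ext Q
    simp only [KSet, Set.mem_setOf_eq, Set.mem_inter_iff]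
  rw [this]
  exact h1.inter (h2.inter h3)

lemma isCompact_KSet : IsCompact (KSet π U) := by
  have hsub : KSet π U ⊆ Set.pi Set.univ (fun _ : X × Y × U => Set.Icc (0:ℝ) 1) := by
    intro Q hQ
    rw [Set.mem_univ_pi]
    intro z
    refine ⟨hQ.1 z, ?_⟩
    calc Q z ≤ ∑ z', Q z' := Finset.single_le_sum (fun z' _ => hQ.1 z') (Finset.mem_univ z)
      _ = 1 := hQ.2.1
  exact IsCompact.of_isClosed_subset
    (isCompact_univ_pi fun _ => isCompact_Icc) isClosed_KSet hsub

end TopologyPartB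
section PartBMain

open Finset Filter Topology

variable {X Y : Type*} [Fintype X] [Fintype Y] {π : X × Y → ℝ}

lemma CWyner_le_Rsh (hπ : IsPMF π) : CWyner π ≤ Rsh π := by
  classical
  set s := Rsh π with hs
  have hs0 : 0 ≤ s := Rsh_nonneg hπ
  set a : ℕ → ℝ := fun n => 1 / ((n : ℝ) + 2) with ha
  have ha_pos : ∀ n : ℕ, 0 < a n := fun n => by
    simp only [ha]; positivity
  have ha_half : ∀ n : ℕ, a n ≤ 1 / 2 := by
    intro n
    simp only [ha]
    apply one_div_le_one_div_of_le (by norm_num)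
    have : (0:ℝ) ≤ (n : ℝ) := Nat.cast_nonneg n
    linarith
  have ha_le1 : ∀ n : ℕ, a n ≤ 1 := fun n => le_trans (ha_half n) (by norm_num)
  have hminle : ∀ n : ℕ, RalphaMin π (a n) ≤ a n * s := by
    intro n
    have h1 : 1 / a n * RalphaMin π (a n) ≤ s := by
      rw [hs]
      unfold Rsh
      exact le_csSup (rshSet_bddAbove hπ) ⟨a n, ⟨ha_pos n, ha_le1 n⟩, rfl⟩
    have h2 := mul_le_mul_of_nonneg_left h1 (ha_pos n).le
    have h3 : a n * (1 / a n * RalphaMin π (a n)) = RalphaMin π (a n) := by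
      rw [← mul_assoc, mul_one_div_cancel (ha_pos n).ne', one_mul]
    rw [h3] at h2
    exact h2
  obtain ⟨P0, hP0, hm0, hMk0⟩ := exists_wyner hπ
  have hchoice : ∀ n : ℕ, ∃ Q ∈ QClass π,
      Ralpha π (a n) Q < RalphaMin π (a n) + (a n) ^ 2 := by
    intro n
    have hne : { r | ∃ Q ∈ QClass π, r = Ralpha π (a n) Q }.Nonempty :=
      ⟨Ralpha π (a n) P0, P0, mem_QClass_of_wyner hP0 hm0, rfl⟩
    obtain ⟨r, hr, hlt⟩ := Real.lt_sInf_add_pos hne (show (0:ℝ) < (a n) ^ 2 by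
      have := ha_pos n; positivity)
    obtain ⟨Q, hQ, rfl⟩ := hr
    exact ⟨Q, hQ, hlt⟩
  choose Q hQmem hQlt using hchoice
  have hQpmf : ∀ n, IsPMF (Q n) := fun n => (hQmem n).1
  have hQsupp : ∀ n, ∀ x y, 0 < margXY (Q n) x y → 0 < π (x, y) := fun n => (hQmem n).2
  have hQK : ∀ n, Q n ∈ KSet π (Fin (Fintype.card X * Fintype.card Y)) := by
    intro n
    refine ⟨(hQpmf n).1, (hQpmf n).2, fun x y hpi => ?_⟩
    by_contra hne
    have h0 : 0 < margXY (Q n) x y :=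
      lt_of_le_of_ne (margXY_nonneg (hQpmf n).1 x y) (Ne.symm hne)
    have := hQsupp n x y h0
    rw [hpi] at this
    exact lt_irrefl 0 this
  obtain ⟨Qs, hQsK, φ, hφ, hconv⟩ := isCompact_KSet.tendsto_subseq hQK
  have hQs_pmf : IsPMF Qs := ⟨hQsK.1, hQsK.2.1⟩
  have hQs_supp : ∀ x y, 0 < margXY Qs x y → 0 < π (x, y) := by
    intro x y h
    rcases (hπ.1 (x, y)).lt_or_eq with hp | hp
    · exact hp
    · exfalso
      have h2 := hQsK.2.2 x y hp.symm
      rw [h2] at h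
      exact lt_irrefl 0 h
  have hF1 : ∀ k, 0 ≤ klDiv (fun p : X × Y => margXY (Q k) p.1 p.2) π :=
    fun k => klDiv_marg_nonneg hπ (hQpmf k) (hQsupp k)
  have hF2 : ∀ k, 0 ≤ condKLind (Q k) := fun k => condKLind_nonneg (hQpmf k)
  have hF3 : ∀ k, 0 ≤ condKLpi π (Q k) := fun k => condKLpi_nonneg hπ (hQpmf k) (hQsupp k)
  have hRal : ∀ k, (1 - a k) * (klDiv (fun p : X × Y => margXY (Q k) p.1 p.2) π
      + condKLind (Q k)) + a k * condKLpi π (Q k) < a k * s + (a k) ^ 2 := by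
    intro k
    have h1 := hQlt k
    unfold Ralpha at h1
    linarith [hminle k]
  have hb1 : ∀ k, klDiv (fun p : X × Y => margXY (Q k) p.1 p.2) π ≤ 2 * (s + 1) * a k := by
    intro k
    have hA : (1 - a k) * (klDiv (fun p : X × Y => margXY (Q k) p.1 p.2) π
        + condKLind (Q k)) ≤ a k * s + (a k) ^ 2 := by
      have h5 : 0 ≤ a k * condKLpi π (Q k) := mul_nonneg (ha_pos k).le (hF3 k)
      linarith [hRal k]
    have hB : (1 / 2) * klDiv (fun p : X × Y => margXY (Q k) p.1 p.2) π
        ≤ (1 - a k) * (klDiv (fun p : X × Y => margXY (Q k) p.1 p.2) π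
        + condKLind (Q k)) := by
      nlinarith [mul_nonneg (by linarith [ha_half k] : (0:ℝ) ≤ 1 - a k) (hF2 k),
        mul_nonneg (by linarith [ha_half k] : (0:ℝ) ≤ 1 / 2 - a k) (hF1 k)]
    have hC : (a k) ^ 2 ≤ a k := by nlinarith [ha_pos k, ha_le1 k]
    linarith
  have hb2 : ∀ k, condKLind (Q k) ≤ 2 * (s + 1) * a k := by
    intro k
    have hA : (1 - a k) * (klDiv (fun p : X × Y => margXY (Q k) p.1 p.2) π
        + condKLind (Q k)) ≤ a k * s + (a k) ^ 2 := by
      have h5 : 0 ≤ a k * condKLpi π (Q k) := mul_nonneg (ha_pos k).le (hF3 k)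
      linarith [hRal k]
    have hB : (1 / 2) * condKLind (Q k)
        ≤ (1 - a k) * (klDiv (fun p : X × Y => margXY (Q k) p.1 p.2) π
        + condKLind (Q k)) := by
      nlinarith [mul_nonneg (by linarith [ha_half k] : (0:ℝ) ≤ 1 - a k) (hF1 k),
        mul_nonneg (by linarith [ha_half k] : (0:ℝ) ≤ 1 / 2 - a k) (hF2 k)]
    have hC : (a k) ^ 2 ≤ a k := by nlinarith [ha_pos k, ha_le1 k]
    linarith
  have hb3 : ∀ k, condKLpi π (Q k) ≤ s + a k := by
    intro k
    have hprodnn : 0 ≤ (1 - a k) * (klDiv (fun p : X × Y => margXY (Q k) p.1 p.2) π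
        + condKLind (Q k)) :=
      mul_nonneg (by linarith [ha_half k]) (by linarith [hF1 k, hF2 k])
    have h5 : a k * condKLpi π (Q k) ≤ a k * (s + a k) := by nlinarith [hRal k]
    exact le_of_mul_le_mul_left h5 (ha_pos k)
  -- limits along the subsequence
  have haphi : ∀ n, a (φ n) ≤ a n := by
    intro n
    simp only [ha]
    apply one_div_le_one_div_of_le (by positivity)
    have h1 : (n : ℝ) ≤ (φ n : ℝ) := Nat.cast_le.2 hφ.le_apply
    linarith
  have hatend : Tendsto a atTop (𝓝 0) := by
    rw [ha]
    have h1 : Tendsto (fun n : ℕ => (n : ℝ) + 2) atTop atTop :=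
      tendsto_atTop_add_const_right _ _ tendsto_natCast_atTop_atTop
    simp only [one_div]; exact h1.inv_tendsto_atTop
  have hg0 : Tendsto (fun n : ℕ => 2 * (s + 1) * a n) atTop (𝓝 0) := by
    have h := hatend.const_mul (2 * (s + 1))
    rw [mul_zero] at h
    exact h
  have hgs : Tendsto (fun n : ℕ => s + a n) atTop (𝓝 s) := by
    have h := (tendsto_const_nhds (x := s) (f := atTop (α := ℕ))).add hatend
    rw [add_zero] at h
    exact h
  have hT1' : Tendsto (fun n => klDiv (fun p : X × Y => margXY (Q (φ n)) p.1 p.2) π)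
      atTop (𝓝 (klDiv (fun p : X × Y => margXY Qs p.1 p.2) π)) := by
    have hfun : (fun n => klDiv (fun p : X × Y => margXY (Q (φ n)) p.1 p.2) π)
        = (fun n => G1 π (Q (φ n))) :=
      funext fun n => klDiv_eq_G1 hπ.1 (hQpmf _) (hQsupp _)
    rw [hfun, klDiv_eq_G1 hπ.1 hQs_pmf hQs_supp]
    exact ((continuous_G1 π).tendsto Qs).comp hconv
  have hT2' : Tendsto (fun n => condKLind (Q (φ n))) atTop (𝓝 (condKLind Qs)) := by
    have hfun : (fun n => condKLind (Q (φ n))) = (fun n => G2 (Q (φ n))) :=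
      funext fun n => condKLind_eq_G2 (hQpmf _)
    rw [hfun, condKLind_eq_G2 hQs_pmf]
    exact (continuous_G2.tendsto Qs).comp hconv
  have hT3' : Tendsto (fun n => condKLpi π (Q (φ n))) atTop (𝓝 (condKLpi π Qs)) := by
    have hfun : (fun n => condKLpi π (Q (φ n))) = (fun n => G3 π (Q (φ n))) :=
      funext fun n => condKLpi_eq_G3 (hQpmf _) (hQsupp _)
    rw [hfun, condKLpi_eq_G3 hQs_pmf hQs_supp]
    exact ((continuous_G3 π).tendsto Qs).comp hconv
  have hkl0 : klDiv (fun p : X × Y => margXY Qs p.1 p.2) π = 0 := by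
    refine le_antisymm ?_ (klDiv_marg_nonneg hπ hQs_pmf hQs_supp)
    refine le_of_tendsto_of_tendsto' hT1' hg0 fun n => ?_
    refine le_trans (hb1 (φ n)) ?_
    have := haphi n
    nlinarith [hs0]
  have hind0 : condKLind Qs = 0 := by
    refine le_antisymm ?_ (condKLind_nonneg hQs_pmf)
    refine le_of_tendsto_of_tendsto' hT2' hg0 fun n => ?_
    refine le_trans (hb2 (φ n)) ?_
    have := haphi n
    nlinarith [hs0]
  have hlim3 : condKLpi π Qs ≤ s := by
    refine le_of_tendsto_of_tendsto' hT3' hgs fun n => ?_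
    refine le_trans (hb3 (φ n)) ?_
    linarith [haphi n]
  have hmargs : ∀ x y, (∑ w, Qs (x, y, w)) = π (x, y) :=
    margXY_eq_of_klDiv_zero hπ hQs_pmf hQs_supp hkl0
  have hMks : IsMarkovXWY Qs := markov_of_condKLind_zero hQs_pmf hind0
  have hmi : mutualInfoW Qs ≤ s := by
    rw [← condKLpi_eq_mutualInfoW hmargs]
    exact hlim3
  unfold CWyner
  refine le_trans (csInf_le ?_ ⟨Qs, hQs_pmf, hmargs, hMks, rfl⟩) hmi
  refine ⟨0, fun r hr => ?_⟩
  obtain ⟨P, hP, _, _, rfl⟩ := hr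
  exact mutualInfoW_nonneg hP

end PartBMain
section LPReduce

open Finset

variable {X Y : Type*} [Fintype X] [Fintype Y]

/-- Carathéodory-style support reduction: a mixture representation of `π` can be
replaced by one with at most `|X||Y|` atoms, without increasing a linear objective. -/
lemma lp_reduce {π : X × Y → ℝ} {k : ℕ} (c : Fin k → X × Y → ℝ) (φf : Fin k → ℝ) :
    ∀ (n : ℕ) (w : Fin k → ℝ),
      (Finset.univ.filter (fun u => 0 < w u)).card ≤ n →
      (∀ u, 0 ≤ w u) → (∑ u, w u) = 1 →
      (∀ u, 0 < w u → (∑ p, c u p) = 1) →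
      (∀ p, ∑ u, w u * c u p = π p) →
      ∃ q : Fin k → ℝ, (∀ u, 0 ≤ q u) ∧ (∑ u, q u) = 1 ∧
        (∀ p, ∑ u, q u * c u p = π p) ∧
        (∀ u, 0 < q u → 0 < w u) ∧
        (Finset.univ.filter (fun u => 0 < q u)).card ≤ Fintype.card X * Fintype.card Y ∧
        (∑ u, q u * φf u) ≤ ∑ u, w u * φf u := by
  classical
  intro n
  induction n with
  | zero =>
    intro w hcard hw0 hw1 hc1 hmarg
    exact ⟨w, hw0, hw1, hmarg, fun u h => h,
      le_trans hcard (Nat.zero_le _), le_refl _⟩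
  | succ n ih =>
    intro w hcard hw0 hw1 hc1 hmarg
    by_cases hsmall : (Finset.univ.filter (fun u => 0 < w u)).card
        ≤ Fintype.card X * Fintype.card Y
    · exact ⟨w, hw0, hw1, hmarg, fun u h => h, hsmall, le_refl _⟩
    set S := Finset.univ.filter (fun u => 0 < w u) with hS
    have hmemS : ∀ u, u ∈ S ↔ 0 < w u := by
      intro u; rw [hS, Finset.mem_filter]; simp
    have hSbig : Fintype.card X * Fintype.card Y < S.card := not_le.1 hsmall
    have hdep : ¬ LinearIndependent ℝ (fun i : {u // u ∈ S} => c i.1) := by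
      intro hli
      have h1 : Fintype.card {u // u ∈ S} ≤
          Module.finrank ℝ (X × Y → ℝ) := hli.fintype_card_le_finrank
      rw [Module.finrank_fintype_fun_eq_card, Fintype.card_prod, Fintype.card_coe] at h1
      omega
    obtain ⟨g0, hg0sum, i0, hg0i0⟩ := Fintype.not_linearIndependent_iff.1 hdep
    -- build the perturbation direction with nonpositive objective
    have key : ∀ g : {u // u ∈ S} → ℝ,
        (∑ i, g i • c i.1) = 0 → (∃ i, g i ≠ 0) →
        (∑ i, g i * φf i.1) ≤ 0 →
        ∃ lam : Fin k → ℝ,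
          (∀ p, ∑ u, lam u * c u p = 0) ∧ (∑ u, lam u) = 0 ∧
          (∀ u, lam u ≠ 0 → u ∈ S) ∧ (∃ u, lam u < 0) ∧
          (∑ u, lam u * φf u) ≤ 0 := by
      rintro g hg0 ⟨j0, hgj0⟩ hobj
      set lam : Fin k → ℝ := fun u => if h : u ∈ S then g ⟨u, h⟩ else 0 with hlam
      have hsupp : ∀ u, lam u ≠ 0 → u ∈ S := by
        intro u hu
        by_contra h
        exact hu (by simp [hlam, h])
      have hlam_on : ∀ (i : {u // u ∈ S}), lam i.1 = g i := by
        intro i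
        simp [hlam, i.2]
      have hrestr : ∀ (F : Fin k → ℝ),
          (∑ u, lam u * F u) = ∑ i : {u // u ∈ S}, g i * F i.1 := by
        intro F
        have h1 : ∑ u ∈ S, lam u * F u = ∑ u, lam u * F u :=
          Finset.sum_subset (Finset.subset_univ S) (fun u _ hu => by
            have h2 : lam u = 0 := by simp [hlam, hu]
            rw [h2, zero_mul])
        rw [← h1, ← Finset.sum_coe_sort S (fun u => lam u * F u)]
        exact Finset.sum_congr rfl fun i _ => by rw [hlam_on i]
      have hlamc : ∀ p, ∑ u, lam u * c u p = 0 := by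
        intro p
        rw [hrestr (fun u => c u p)]
        have h2 := congrFun hg0 p
        simpa [Finset.sum_apply] using h2
      have hlam_sum : (∑ u, lam u) = 0 := by
        have h2 : ∑ u, lam u = ∑ u, ∑ p, lam u * c u p := by
          refine Finset.sum_congr rfl fun u _ => ?_
          rcases eq_or_ne (lam u) 0 with h | h
          · rw [h]; simp
          · rw [← Finset.mul_sum, hc1 u ((hmemS u).1 (hsupp u h)), mul_one]
        rw [h2, Finset.sum_comm]
        rw [Finset.sum_congr rfl fun p _ => hlamc p]
        simp
      have hneg : ∃ u, lam u < 0 := by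
        by_contra hno
        push_neg at hno
        have hall : ∀ u ∈ Finset.univ, lam u = 0 :=
          (Finset.sum_eq_zero_iff_of_nonneg (fun u _ => hno u)).1 hlam_sum
        have := hall j0.1 (Finset.mem_univ _)
        rw [hlam_on j0] at this
        exact hgj0 this
      exact ⟨lam, hlamc, hlam_sum, hsupp, hneg, by rw [hrestr φf]; exact hobj⟩
    have hlamex : ∃ lam : Fin k → ℝ,
        (∀ p, ∑ u, lam u * c u p = 0) ∧ (∑ u, lam u) = 0 ∧
        (∀ u, lam u ≠ 0 → u ∈ S) ∧ (∃ u, lam u < 0) ∧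
        (∑ u, lam u * φf u) ≤ 0 := by
      rcases le_or_gt (∑ i, g0 i * φf i.1) 0 with hobj | hobj
      · exact key g0 hg0sum ⟨i0, hg0i0⟩ hobj
      · refine key (fun i => -g0 i) ?_ ⟨i0, neg_ne_zero.2 hg0i0⟩ ?_
        · have h2 : ∑ i : {u // u ∈ S}, (-g0 i) • c i.1
              = -∑ i : {u // u ∈ S}, g0 i • c i.1 := by
            simp [neg_smul]
          rw [h2, hg0sum, neg_zero]
        · have h2 : ∑ i : {u // u ∈ S}, (-g0 i) * φf i.1
              = -∑ i : {u // u ∈ S}, g0 i * φf i.1 := by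
            simp [neg_mul]
          rw [h2]
          linarith
    obtain ⟨lam, hlamc, hlam_sum, hlsupp, hneg, hobj⟩ := hlamex
    -- pivot
    set T := Finset.univ.filter (fun u => lam u < 0) with hT
    have hTne : T.Nonempty := by
      obtain ⟨u, hu⟩ := hneg
      exact ⟨u, by rw [hT, Finset.mem_filter]; exact ⟨Finset.mem_univ u, hu⟩⟩
    obtain ⟨u0, hu0T, hu0min⟩ := Finset.exists_min_image T (fun u => w u / (-lam u)) hTne
    have hlamu0 : lam u0 < 0 := by
      have := Finset.mem_filter.1 (hT ▸ hu0T)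
      exact this.2
    have hu0S : u0 ∈ S := hlsupp u0 (ne_of_lt hlamu0)
    have hwu0 : 0 < w u0 := (hmemS u0).1 hu0S
    set θ := w u0 / (-lam u0) with hθ
    have hθ0 : 0 ≤ θ := div_nonneg (hw0 u0) (by linarith)
    set q : Fin k → ℝ := fun u => w u + θ * lam u with hq
    have hq0 : ∀ u, 0 ≤ q u := by
      intro u
      rcases lt_or_ge (lam u) 0 with h | h
      · have huT : u ∈ T := by rw [hT, Finset.mem_filter]; exact ⟨Finset.mem_univ u, h⟩
        have hmin := hu0min u huT
        have h2 : θ * (-lam u) ≤ w u := (le_div_iff₀ (by linarith)).1 hmin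
        have h3 : θ * lam u = -(θ * -lam u) := by ring
        show 0 ≤ w u + θ * lam u
        rw [h3]
        linarith
      · have := mul_nonneg hθ0 h
        show 0 ≤ w u + θ * lam u
        linarith [hw0 u]
    have hq1 : (∑ u, q u) = 1 := by
      show (∑ u, (w u + θ * lam u)) = 1
      rw [Finset.sum_add_distrib, ← Finset.mul_sum, hlam_sum, mul_zero, add_zero]
      exact hw1
    have hqmarg : ∀ p, ∑ u, q u * c u p = π p := by
      intro p
      show (∑ u, (w u + θ * lam u) * c u p) = π p
      have h2 : ∀ u, (w u + θ * lam u) * c u p = w u * c u p + θ * (lam u * c u p) := by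
        intro u; ring
      rw [Finset.sum_congr rfl fun u _ => h2 u, Finset.sum_add_distrib,
        ← Finset.mul_sum, hlamc p, mul_zero, add_zero]
      exact hmarg p
    have hqsupp : ∀ u, 0 < q u → 0 < w u := by
      intro u hu
      rcases (hw0 u).lt_or_eq with h | h
      · exact h
      · exfalso
        have hlu : lam u = 0 := by
          by_contra hne
          have := (hmemS u).1 (hlsupp u hne)
          rw [← h] at this
          exact lt_irrefl _ this
        have : q u = 0 := by show w u + θ * lam u = 0; rw [hlu, ← h]; ring
        rw [this] at hu
        exact lt_irrefl 0 hu
    have hqu0 : q u0 = 0 := by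
      show w u0 + θ * lam u0 = 0
      rw [hθ]
      have hl0 : -lam u0 ≠ 0 := by linarith
      field_simp
      rw [div_self (ne_of_lt hlamu0)]; ring
    have hcard' : (Finset.univ.filter (fun u => 0 < q u)).card ≤ n := by
      have hsub : Finset.univ.filter (fun u => 0 < q u) ⊆ S := by
        intro u hu
        have := (Finset.mem_filter.1 hu).2
        exact (hmemS u).2 (hqsupp u this)
      have hu0notin : u0 ∉ Finset.univ.filter (fun u => 0 < q u) := by
        rw [Finset.mem_filter]
        rintro ⟨-, h⟩
        rw [hqu0] at h
        exact lt_irrefl 0 h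
      have hss : Finset.univ.filter (fun u => 0 < q u) ⊂ S :=
        (Finset.ssubset_iff_of_subset hsub).2 ⟨u0, hu0S, hu0notin⟩
      have := Finset.card_lt_card hss
      omega
    obtain ⟨q', hq'0, hq'1, hq'marg, hq'supp, hq'card, hq'obj⟩ :=
      ih q hcard' hq0 hq1 (fun u h => hc1 u (hqsupp u h)) hqmarg
    refine ⟨q', hq'0, hq'1, hq'marg, fun u h => hqsupp u (hq'supp u h), hq'card, ?_⟩
    refine le_trans hq'obj ?_
    show (∑ u, (w u + θ * lam u) * φf u) ≤ ∑ u, w u * φf u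
    have h2 : ∀ u, (w u + θ * lam u) * φf u = w u * φf u + θ * (lam u * φf u) := by
      intro u; ring
    rw [Finset.sum_congr rfl fun u _ => h2 u, Finset.sum_add_distrib, ← Finset.mul_sum]
    have := mul_nonpos_of_nonneg_of_nonpos hθ0 hobj
    linarith

end LPReduce
section MIsum

open Finset

variable {X Y U : Type*} [Fintype X] [Fintype Y] [Fintype U] {π : X × Y → ℝ}

lemma mutualInfoW_eq_sum (P : X × Y × U → ℝ) (hP : IsPMF P)
    (hm : ∀ x y, (∑ w, P (x, y, w)) = π (x, y)) :
    mutualInfoW P = ∑ u, margU P u *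
      klDiv (fun p : X × Y => P (p.1, p.2, u) / margU P u) π := by
  classical
  have hstep1 : mutualInfoW P = ∑ z : X × Y × U,
      P z * Real.log (P z / (π (z.1, z.2.1) * margU P z.2.2)) := by
    unfold mutualInfoW
    have hterm : ∀ z ∈ Finset.univ.filter (fun z : X × Y × U => 0 < P z),
        P z * Real.log (P z /
          ((∑ w, P (z.1, z.2.1, w)) * (∑ p : X × Y, P (p.1, p.2, z.2.2))))
        = P z * Real.log (P z / (π (z.1, z.2.1) * margU P z.2.2)) := by
      intro z _
      obtain ⟨x, y, u⟩ := z
      show P (x,y,u) * Real.log (P (x,y,u) / ((∑ w, P (x, y, w)) * margU P u)) =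
        P (x,y,u) * Real.log (P (x,y,u) / (π (x, y) * margU P u))
      rw [hm x y]
    rw [Finset.sum_congr rfl hterm]
    exact sum_filter_pos hP.1 _ (fun z hz => by rw [hz, zero_mul])
  have hpt : ∀ (u : U) (x : X) (y : Y),
      margU P u * ((P (x, y, u) / margU P u) *
        Real.log ((P (x, y, u) / margU P u) / π (x, y)))
      = P (x, y, u) * Real.log (P (x, y, u) / (π (x, y) * margU P u)) := by
    intro u x y
    rcases eq_or_ne (margU P u) 0 with h | h
    · have hz : P (x, y, u) = 0 := le_antisymm (h ▸ le_margU hP.1 x y u) (hP.1 _)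
      rw [h, hz]
      simp
    · have harg : (P (x, y, u) / margU P u) / π (x, y)
          = P (x, y, u) / (π (x, y) * margU P u) := by
        rw [div_div, mul_comm]
      rw [harg]
      field_simp
  have hklfull : ∀ u : U, klDiv (fun p : X × Y => P (p.1, p.2, u) / margU P u) π
      = ∑ p : X × Y, (P (p.1, p.2, u) / margU P u) *
          Real.log ((P (p.1, p.2, u) / margU P u) / π p) := by
    intro u
    unfold klDiv
    exact sum_filter_pos (fun p => div_nonneg (hP.1 _) (margU_nonneg hP.1 u)) _
      (fun p hp => by
        show (P (p.1, p.2, u) / margU P u) *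
          Real.log ((P (p.1, p.2, u) / margU P u) / π p) = 0
        rw [hp, zero_mul])
  calc mutualInfoW P
      = ∑ z : X × Y × U, P z * Real.log (P z / (π (z.1, z.2.1) * margU P z.2.2)) := hstep1
    _ = ∑ x, ∑ y, ∑ u, P (x,y,u) * Real.log (P (x,y,u) / (π (x, y) * margU P u)) :=
        sum_triple _
    _ = ∑ u, ∑ x, ∑ y, P (x,y,u) * Real.log (P (x,y,u) / (π (x, y) * margU P u)) :=
        sum_comm3 _
    _ = ∑ u, margU P u * klDiv (fun p : X × Y => P (p.1, p.2, u) / margU P u) π := by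
        refine Finset.sum_congr rfl fun u _ => ?_
        rw [hklfull u, Finset.mul_sum, Fintype.sum_prod_type]
        exact Finset.sum_congr rfl fun x _ => Finset.sum_congr rfl fun y _ => by
          show P (x,y,u) * Real.log (P (x,y,u) / (π (x, y) * margU P u))
            = margU P u * ((P (x, y, u) / margU P u) *
              Real.log ((P (x, y, u) / margU P u) / π (x, y)))
          exact (hpt u x y).symm

end MIsum
section PartD

open Finset

variable {X Y U : Type*} [Fintype X] [Fintype Y] [Fintype U]

lemma mul_sum_pair (a : ℝ) (f : X × Y → ℝ) :
    ∑ x, ∑ y, a * f (x, y) = a * ∑ p, f p := by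
  rw [Fintype.sum_prod_type, Finset.mul_sum]
  exact Finset.sum_congr rfl fun x _ => (Finset.mul_sum _ _ _).symm

variable {π : X × Y → ℝ}

lemma CWyner_le_CWynerAll (hπ : IsPMF π) : CWyner π ≤ CWynerAll π := by
  classical
  unfold CWynerAll
  have hnexy : Nonempty (X × Y) := by
    by_contra h
    rw [not_nonempty_iff] at h
    have h2 := hπ.2
    rw [Finset.univ_eq_empty, Finset.sum_empty] at h2
    exact one_ne_zero h2.symm
  have hMpos : 0 < Fintype.card X * Fintype.card Y := by
    have h1 : 0 < Fintype.card (X × Y) := Fintype.card_pos_iff.2 hnexy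
    rwa [Fintype.card_prod] at h1
  have hne : Set.Nonempty { r | ∃ (k : ℕ) (P : X × Y × Fin k → ℝ),
      IsPMF P ∧ (∀ x y, (∑ w, P (x, y, w)) = π (x, y)) ∧ IsMarkovXWY P ∧
        r = mutualInfoW P } := by
    obtain ⟨P0, hP0, hm0, hMk0⟩ := exists_wyner (π := π) hπ
    exact ⟨mutualInfoW P0, Fintype.card X * Fintype.card Y, P0, hP0, hm0, hMk0, rfl⟩
  apply le_csInf hne
  rintro r ⟨k, P, hP, hm, hMk, rfl⟩
  set c : Fin k → X × Y → ℝ := fun u p => P (p.1, p.2, u) / margU P u with hcdef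
  set φf : Fin k → ℝ := fun u => klDiv (c u) π with hφdef
  have hw0 : ∀ u : Fin k, 0 ≤ margU P u := margU_nonneg hP.1
  have hw1 : (∑ u, margU P u) = 1 := by rw [sum_margU]; exact hP.2
  have hc0 : ∀ (u : Fin k) (p : X × Y), 0 ≤ c u p :=
    fun u p => div_nonneg (hP.1 _) (hw0 u)
  have hc1 : ∀ u : Fin k, 0 < margU P u → (∑ p : X × Y, c u p) = 1 := by
    intro u hu
    show (∑ p : X × Y, P (p.1, p.2, u) / margU P u) = 1
    rw [← Finset.sum_div]
    exact div_self (ne_of_gt hu)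
  have hmargc : ∀ p : X × Y, (∑ u, margU P u * c u p) = π p := by
    intro p
    have h2 : ∀ u : Fin k, margU P u * c u p = P (p.1, p.2, u) := by
      intro u
      rcases eq_or_ne (margU P u) 0 with h | h
      · have hz : P (p.1, p.2, u) = 0 :=
          le_antisymm (h ▸ le_margU hP.1 p.1 p.2 u) (hP.1 _)
        show margU P u * (P (p.1, p.2, u) / margU P u) = P (p.1, p.2, u)
        rw [h, hz]; simp
      · show margU P u * (P (p.1, p.2, u) / margU P u) = P (p.1, p.2, u)
        field_simp
    rw [Finset.sum_congr rfl fun u _ => h2 u]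
    simpa using hm p.1 p.2
  have hcprod : ∀ u : Fin k, 0 < margU P u → ∀ x y,
      c u (x, y) = (∑ y', c u (x, y')) * (∑ x', c u (x', y)) := by
    intro u hu x y
    have hMku : P (x, y, u) * margU P u
        = (∑ y', P (x, y', u)) * (∑ x', P (x', y, u)) := hMk x y u
    show P (x, y, u) / margU P u
      = (∑ y', P (x, y', u) / margU P u) * (∑ x', P (x', y, u) / margU P u)
    rw [← Finset.sum_div, ← Finset.sum_div, div_mul_div_comm, ← hMku]
    have hm0 : margU P u ≠ 0 := ne_of_gt hu
    field_simp
  obtain ⟨q, hq0, hq1, hqmarg, hqsupp, hqcard, hqobj⟩ :=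
    lp_reduce (π := π) c φf k (margU P)
      (le_trans (Finset.card_filter_le _ _) (by simp)) hw0 hw1 hc1 hmargc
  set Sq := Finset.univ.filter (fun u => 0 < q u) with hSq
  have hmemSq : ∀ u, u ∈ Sq ↔ 0 < q u := by
    intro u; rw [hSq, Finset.mem_filter]; simp
  have hqzero : ∀ u, u ∉ Sq → q u = 0 := by
    intro u hu
    rcases (hq0 u).lt_or_eq with h | h
    · exact absurd ((hmemSq u).2 h) hu
    · exact h.symm
  have hcard2 : Fintype.card {u // u ∈ Sq} ≤ Fintype.card
      (Fin (Fintype.card X * Fintype.card Y)) := by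
    rw [Fintype.card_coe, Fintype.card_fin]
    exact hqcard
  obtain ⟨emb⟩ := Function.Embedding.nonempty_iff_card_le.2 hcard2
  set ι : Fin k → Fin (Fintype.card X * Fintype.card Y) :=
    fun u => if h : u ∈ Sq then emb ⟨u, h⟩ else ⟨0, hMpos⟩ with hι
  set P' : X × Y × Fin (Fintype.card X * Fintype.card Y) → ℝ :=
    fun z => ∑ u ∈ Sq.filter (fun u => ι u = z.2.2), q u * c u (z.1, z.2.1) with hP'
  have hfiber : ∀ j, Sq.filter (fun u => ι u = j) = ∅ ∨
      ∃ u, u ∈ Sq ∧ Sq.filter (fun u => ι u = j) = {u} := by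
    intro j
    rcases Finset.eq_empty_or_nonempty (Sq.filter (fun u => ι u = j)) with h | h
    · exact Or.inl h
    · right
      obtain ⟨u, hu⟩ := h
      have hu' := Finset.mem_filter.1 hu
      refine ⟨u, hu'.1, ?_⟩
      apply Finset.eq_singleton_iff_unique_mem.2
      refine ⟨hu, fun v hv => ?_⟩
      have hv' := Finset.mem_filter.1 hv
      have heqi : ι v = ι u := by rw [hv'.2, hu'.2]
      simp only [hι] at heqi
      rw [dif_pos hv'.1, dif_pos hu'.1] at heqi
      exact congrArg Subtype.val (emb.injective heqi)
  have hP'z : ∀ x y j, P' (x, y, j)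
      = ∑ u ∈ Sq.filter (fun u => ι u = j), q u * c u (x, y) := fun x y j => rfl
  have hmarg' : ∀ x y, (∑ j, P' (x, y, j)) = π (x, y) := by
    intro x y
    rw [Finset.sum_congr rfl fun j (_ : j ∈ Finset.univ) => hP'z x y j,
      Finset.sum_fiberwise,
      Finset.sum_subset (Finset.subset_univ Sq)
        (fun u _ hu => by rw [hqzero u hu, zero_mul])]
    exact hqmarg (x, y)
  have hP'0 : ∀ z, 0 ≤ P' z := by
    intro z
    refine Finset.sum_nonneg fun u _ => mul_nonneg (hq0 u) (hc0 u _)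
  have hP'pmf : IsPMF P' := by
    refine ⟨hP'0, ?_⟩
    rw [sum_triple P']
    rw [Finset.sum_congr rfl fun x _ => Finset.sum_congr rfl fun y _ => hmarg' x y]
    rw [← Fintype.sum_prod_type (f := π)]
    exact hπ.2
  have margU' : ∀ j, margU P' j = ∑ u ∈ Sq.filter (fun u => ι u = j), q u := by
    intro j
    rw [margU_eq]
    calc ∑ x, ∑ y, P' (x, y, j)
        = ∑ x, ∑ y, ∑ u ∈ Sq.filter (fun u => ι u = j), q u * c u (x, y) :=
          Finset.sum_congr rfl fun x _ => Finset.sum_congr rfl fun y _ => hP'z x y j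
      _ = ∑ u ∈ Sq.filter (fun u => ι u = j), ∑ x, ∑ y, q u * c u (x, y) := by
          rw [Finset.sum_congr rfl fun x (_ : x ∈ Finset.univ) => Finset.sum_comm,
            Finset.sum_comm]
      _ = ∑ u ∈ Sq.filter (fun u => ι u = j), q u * ∑ p : X × Y, c u p :=
          Finset.sum_congr rfl fun u _ => mul_sum_pair (q u) (c u)
      _ = ∑ u ∈ Sq.filter (fun u => ι u = j), q u := by
          refine Finset.sum_congr rfl fun u hu => ?_
          have huS := (Finset.mem_filter.1 hu).1
          have hqu : 0 < q u := (hmemSq u).1 huS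
          rw [hc1 u (hqsupp u hqu), mul_one]
  have margXU' : ∀ x j, margXU P' x j
      = ∑ u ∈ Sq.filter (fun u => ι u = j), q u * ∑ y, c u (x, y) := by
    intro x j
    show (∑ y, P' (x, y, j)) = _
    rw [Finset.sum_congr rfl fun y (_ : y ∈ Finset.univ) => hP'z x y j,
      Finset.sum_comm]
    exact Finset.sum_congr rfl fun u _ => (Finset.mul_sum _ _ _).symm
  have margYU' : ∀ y j, margYU P' y j
      = ∑ u ∈ Sq.filter (fun u => ι u = j), q u * ∑ x, c u (x, y) := by
    intro y j
    show (∑ x, P' (x, y, j)) = _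
    rw [Finset.sum_congr rfl fun x (_ : x ∈ Finset.univ) => hP'z x y j,
      Finset.sum_comm]
    exact Finset.sum_congr rfl fun u _ => (Finset.mul_sum _ _ _).symm
  have hMk' : IsMarkovXWY P' := by
    intro x y j
    show P' (x, y, j) * margU P' j = margXU P' x j * margYU P' y j
    rcases hfiber j with hfib | ⟨u, huSq, hfib⟩
    · rw [hP'z x y j, margU' j, margXU' x j, margYU' y j, hfib]
      simp
    · rw [hP'z x y j, margU' j, margXU' x j, margYU' y j, hfib,
        Finset.sum_singleton, Finset.sum_singleton, Finset.sum_singleton,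
        Finset.sum_singleton]
      have hqu : 0 < q u := (hmemSq u).1 huSq
      rw [hcprod u (hqsupp u hqu) x y]
      ring
  have hmi' : mutualInfoW P' ≤ mutualInfoW P := by
    rw [mutualInfoW_eq_sum P' hP'pmf hmarg', mutualInfoW_eq_sum P hP hm]
    have hφeq : ∀ u : Fin k,
        klDiv (fun p : X × Y => P (p.1, p.2, u) / margU P u) π = φf u := fun u => rfl
    have hstep : ∑ j, margU P' j *
        klDiv (fun p : X × Y => P' (p.1, p.2, j) / margU P' j) π
        = ∑ u ∈ Sq, q u * φf u := by
      rw [← Finset.sum_fiberwise Sq ι (fun u => q u * φf u)]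
      refine Finset.sum_congr rfl fun j _ => ?_
      rcases hfiber j with hfib | ⟨u, huSq, hfib⟩
      · rw [margU' j, hfib]
        simp
      · rw [margU' j, hfib, Finset.sum_singleton, Finset.sum_singleton]
        have hqu : 0 < q u := (hmemSq u).1 huSq
        have hfun : (fun p : X × Y => P' (p.1, p.2, j) / q u) = c u := by
          funext p
          have h1 : P' (p.1, p.2, j) = q u * c u p := by
            rw [hP'z p.1 p.2 j, hfib, Finset.sum_singleton]
          rw [h1, mul_comm, mul_div_assoc, div_self (ne_of_gt hqu), mul_one]
        rw [hfun]
    rw [hstep, Finset.sum_subset (Finset.subset_univ Sq)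
      (fun u _ hu => by rw [hqzero u hu, zero_mul])]
    calc ∑ u, q u * φf u ≤ ∑ u, margU P u * φf u := hqobj
      _ = ∑ u, margU P u * klDiv (fun p : X × Y => P (p.1, p.2, u) / margU P u) π :=
          Finset.sum_congr rfl fun u _ => by rw [hφeq u]
  unfold CWyner
  refine le_trans (csInf_le ?_ ⟨P', hP'pmf, hmarg', hMk', rfl⟩) hmi'
  refine ⟨0, fun r hr => ?_⟩
  obtain ⟨Pr, hPr, _, _, rfl⟩ := hr
  exact mutualInfoW_nonneg hPr

end PartD
/-- The variational quantities coincide with Wyner's common information: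
`R_sh = R* = C_Wyner(X;Y)` (the latter over arbitrary finite auxiliary alphabets). -/
theorem Rsh_eq_Rstar_eq_CWyner
    {X Y : Type*} [Fintype X] [Fintype Y] (π : X × Y → ℝ) (hπ : IsPMF π) :
    Rsh π = CWyner π ∧ CWyner π = CWynerAll π := by
  constructor
  · exact le_antisymm (Rsh_le_CWyner hπ) (CWyner_le_Rsh hπ)
  · exact le_antisymm (CWyner_le_CWynerAll hπ) (CWynerAll_le_CWyner hπ)
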